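/- arXiv:0811.1612 — 4 statements merged into one kernel-verified Lean document; each statement's English description precedes it below -/
import Mathlib

section
/- Let Λ, Λ' be relatively-separated subsets of ℝ^d. If there exists a matrix A = (a(λ,λ'))_{λ∈Λ,λ'∈Λ'} in the Sjöstrand class C(Λ,Λ') that has ℓ^p-stability for some 1 ≤ p ≤ ∞, then there exists a positive number R₀ such that for every bounded set K ⊂ ℝ^d, the cardinality of Λ ∩ B(K,R₀) is at least the cardinality of Λ' ∩ K, where B(K,R) is the set of all points of ℝ^d at distance less than R from K. -/
open scoped ENNReal NNReal

/-- The cube `k + [0,1)^d` in `ℝ^d`. -/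
def unitCube {d : ℕ} (k : Fin d → ℤ) : Set (Fin d → ℝ) :=
  {x | ∀ i, (k i : ℝ) ≤ x i ∧ x i < k i + 1}

/-- The relative-separation constant `R(Λ) = sup_x ∑_{λ ∈ Λ} χ_{λ+[0,1)^d}(x)` of
a subset `Λ` of `ℝ^d`; `Λ` is relatively separated when `relSep Λ < ∞`. -/
noncomputable def relSep {d : ℕ} (Λ : Set (Fin d → ℝ)) : ℝ≥0∞ :=
  ⨆ x : Fin d → ℝ, ∑' l : Λ,
    (unitCube (0 : Fin d → ℤ)).indicator (fun _ => (1 : ℝ≥0∞)) (x - (l : Fin d → ℝ))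

/-- The Sjöstrand class norm
`‖A‖_C = ∑_{k ∈ ℤ^d} sup { |a(λ,λ')| : λ - λ' ∈ k + [0,1)^d }` of a matrix indexed by
`Λ × Λ'`; the matrix belongs to the Sjöstrand class `C(Λ,Λ')` when `sjNorm a < ∞`. -/
noncomputable def sjNorm {d : ℕ} {Λ Λ' : Set (Fin d → ℝ)} (a : Λ → Λ' → ℂ) : ℝ≥0∞ :=
  ∑' k : Fin d → ℤ, ⨆ (l : Λ) (l' : Λ')
    (_ : (l : Fin d → ℝ) - (l' : Fin d → ℝ) ∈ unitCube k), (‖a l l'‖₊ : ℝ≥0∞)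

/-- The action `(Ac)(λ) = ∑_{λ'} a(λ,λ') c(λ')` of a matrix on sequences. -/
noncomputable def matApply {d : ℕ} {Λ Λ' : Set (Fin d → ℝ)}
    (a : Λ → Λ' → ℂ) (c : Λ' → ℂ) : Λ → ℂ :=
  fun l => ∑' l' : Λ', a l l' * c l'

/-- The `ℓ^p` norm (valued in `ℝ≥0∞`) of an `ℝ≥0∞`-valued family:
for `p = ∞` it is the supremum, otherwise `(∑ f i ^ p)^(1/p)`. -/
noncomputable def seqNormE {ι : Type*} (p : ℝ≥0∞) (f : ι → ℝ≥0∞) : ℝ≥0∞ :=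
  if p = ∞ then ⨆ i, f i else (∑' i, f i ^ p.toReal) ^ (1 / p.toReal)

/-- The `ℓ^p` norm (valued in `ℝ≥0∞`) of a complex-valued family. -/
noncomputable def seqNorm {ι : Type*} (p : ℝ≥0∞) (f : ι → ℂ) : ℝ≥0∞ :=
  seqNormE p fun i => (‖f i‖₊ : ℝ≥0∞)

/-- An operator `A` between sequence spaces has `ℓ^p`-stability if there is a
positive finite constant `C` with `C⁻¹ ‖c‖_p ≤ ‖A c‖_p ≤ C ‖c‖_p` for every `c ∈ ℓ^p`. -/
def HasStability {ι κ : Type*} (p : ℝ≥0∞) (A : (ι → ℂ) → κ → ℂ) : Prop :=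
  ∃ C : ℝ≥0∞, 0 < C ∧ C < ∞ ∧
    ∀ c : ι → ℂ, seqNorm p c < ∞ →
      C⁻¹ * seqNorm p c ≤ seqNorm p (A c) ∧ seqNorm p (A c) ≤ C * seqNorm p c

lemma mem_unitCube_floor {d : ℕ} (v : Fin d → ℝ) : v ∈ unitCube (fun i => ⌊v i⌋) := by
  intro i
  exact ⟨Int.floor_le _, Int.lt_floor_add_one _⟩

lemma mem_unitCube_zero {d : ℕ} (v : Fin d → ℝ) (h : ∀ i, 0 ≤ v i ∧ v i < 1) :
    v ∈ unitCube (0 : Fin d → ℤ) := by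
  intro i
  simpa using h i

lemma tsum_indicator_le_relSep {d : ℕ} (Λ : Set (Fin d → ℝ)) (x : Fin d → ℝ) :
    ∑' l : Λ, (unitCube (0 : Fin d → ℤ)).indicator (fun _ => (1 : ℝ≥0∞)) (x - (l : Fin d → ℝ))
      ≤ relSep Λ :=
  le_iSup (fun x : Fin d → ℝ => ∑' l : Λ,
    (unitCube (0 : Fin d → ℤ)).indicator (fun _ => (1 : ℝ≥0∞)) (x - (l : Fin d → ℝ))) x

lemma aux_card_le {d : ℕ} (Λ : Set (Fin d → ℝ)) (G : Finset Λ) (x : Fin d → ℝ)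
    (h : ∀ l ∈ G, x - (l : Fin d → ℝ) ∈ unitCube (0 : Fin d → ℤ)) :
    (G.card : ℝ≥0∞) ≤ relSep Λ := by
  have h1 : (G.card : ℝ≥0∞) = ∑ l ∈ G,
      (unitCube (0 : Fin d → ℤ)).indicator (fun _ => (1 : ℝ≥0∞)) (x - (l : Fin d → ℝ)) := by
    rw [Finset.sum_congr rfl (fun l hl => Set.indicator_of_mem (h l hl) _)]
    simp
  rw [h1]
  exact le_trans (ENNReal.sum_le_tsum G) (tsum_indicator_le_relSep Λ x)

lemma aux_cover {d : ℕ} (Λ : Set (Fin d → ℝ)) (y : Fin d → ℝ) (k : Fin d → ℤ) :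
    ∑' l : Λ, (if (fun i => ⌊(l : Fin d → ℝ) i - y i⌋) = k then (1 : ℝ≥0∞) else 0)
      ≤ 2 ^ d * relSep Λ := by
  classical
  set w : Fin d → ℝ := fun i => y i + k i with hw
  set X : (Fin d → Bool) → (Fin d → ℝ) := fun ε i => w i + (if ε i then 1 else 0) with hX
  have hpt : ∀ l : Λ, (if (fun i => ⌊(l : Fin d → ℝ) i - y i⌋) = k then (1 : ℝ≥0∞) else 0)
      ≤ ∑ ε : Fin d → Bool,
        (unitCube (0 : Fin d → ℤ)).indicator (fun _ => (1 : ℝ≥0∞)) (X ε - (l : Fin d → ℝ)) := by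
    intro l
    split_ifs with hfl
    · have hwl : ∀ i, w i ≤ (l : Fin d → ℝ) i ∧ (l : Fin d → ℝ) i < w i + 1 := by
        intro i
        have : ⌊(l : Fin d → ℝ) i - y i⌋ = k i := congrFun hfl i
        have h1 : (k i : ℝ) ≤ (l : Fin d → ℝ) i - y i := this ▸ Int.floor_le _
        have h2 : (l : Fin d → ℝ) i - y i < k i + 1 := this ▸ Int.lt_floor_add_one _
        constructor <;> simp only [hw] <;> linarith
      set ε₀ : Fin d → Bool := fun i => decide (w i < (l : Fin d → ℝ) i) with hε₀
      have hmem : X ε₀ - (l : Fin d → ℝ) ∈ unitCube (0 : Fin d → ℤ) := by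
        apply mem_unitCube_zero
        intro i
        have h1 := (hwl i).1
        have h2 := (hwl i).2
        simp only [hX, hε₀, Pi.sub_apply]
        by_cases hlt : w i < (l : Fin d → ℝ) i
        · simp [hlt]; constructor <;> linarith
        · push_neg at hlt
          simp [not_lt.2 hlt]
          constructor <;> linarith
      calc (1 : ℝ≥0∞) = (unitCube (0 : Fin d → ℤ)).indicator (fun _ => (1 : ℝ≥0∞))
            (X ε₀ - (l : Fin d → ℝ)) := by rw [Set.indicator_of_mem hmem]
        _ ≤ _ := Finset.single_le_sum (f := fun ε => (unitCube (0 : Fin d → ℤ)).indicator (fun _ => (1 : ℝ≥0∞)) (X ε - (l : Fin d → ℝ))) (fun _ _ => zero_le) (Finset.mem_univ ε₀)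
    · exact zero_le
  calc ∑' l : Λ, (if (fun i => ⌊(l : Fin d → ℝ) i - y i⌋) = k then (1 : ℝ≥0∞) else 0)
      ≤ ∑' l : Λ, ∑ ε : Fin d → Bool,
        (unitCube (0 : Fin d → ℤ)).indicator (fun _ => (1 : ℝ≥0∞)) (X ε - (l : Fin d → ℝ)) :=
        ENNReal.tsum_le_tsum hpt
    _ = ∑ ε : Fin d → Bool, ∑' l : Λ,
        (unitCube (0 : Fin d → ℤ)).indicator (fun _ => (1 : ℝ≥0∞)) (X ε - (l : Fin d → ℝ)) :=
        Summable.tsum_finsetSum (fun _ _ => ENNReal.summable)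
    _ ≤ ∑ ε : Fin d → Bool, relSep Λ := Finset.sum_le_sum (fun ε _ => tsum_indicator_le_relSep Λ (X ε))
    _ = 2 ^ d * relSep Λ := by
        rw [Finset.sum_const, nsmul_eq_mul]
        congr 1
        simp [Fintype.card_fun]


lemma seqNormE_mono {ι : Type*} (p : ℝ≥0∞) {f g : ι → ℝ≥0∞} (h : ∀ i, f i ≤ g i) :
    seqNormE p f ≤ seqNormE p g := by
  unfold seqNormE
  split_ifs
  · exact iSup_mono h
  · exact ENNReal.rpow_le_rpow (ENNReal.tsum_le_tsum fun i =>
      ENNReal.rpow_le_rpow (h i) ENNReal.toReal_nonneg) (by positivity)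

lemma rpow_sub_one_mul {μ : ℝ≥0∞} (hμ0 : μ ≠ 0) (hμt : μ ≠ ∞) (q : ℝ) :
    μ ^ (q - 1) * μ = μ ^ q := by
  nth_rewrite 2 [← ENNReal.rpow_one μ]
  rw [← ENNReal.rpow_add _ _ hμ0 hμt]
  norm_num

lemma aux_jensen {ι : Type*} (s : Finset ι) (t x : ι → ℝ≥0∞) {q : ℝ} (hq : 1 ≤ q)
    (hT : (∑ i ∈ s, t i) ≠ ∞) :
    (∑ i ∈ s, t i * x i) ^ q ≤ (∑ i ∈ s, t i) ^ (q - 1) * ∑ i ∈ s, t i * x i ^ q := by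
  classical
  set T := ∑ i ∈ s, t i with hTdef
  rcases eq_or_ne T 0 with hT0 | hT0
  · have hz : ∀ i ∈ s, t i = 0 := by
      intro i hi
      exact le_antisymm (hT0 ▸ Finset.single_le_sum (f := t) (fun _ _ => zero_le) hi) (zero_le)
    have h1 : ∑ i ∈ s, t i * x i = 0 := Finset.sum_eq_zero (fun i hi => by rw [hz i hi, zero_mul])
    rw [h1, ENNReal.zero_rpow_of_pos (by linarith)]
    exact zero_le
  · have hw : ∑ i ∈ s, t i / T = 1 := by
      simp only [div_eq_mul_inv, ← Finset.sum_mul, ← hTdef]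
      exact ENNReal.mul_inv_cancel hT0 hT
    have key := ENNReal.rpow_arith_mean_le_arith_mean_rpow s (fun i => t i / T) x hw hq
    have hrw : ∀ i ∈ s, t i * x i = T * ((t i / T) * x i) := by
      intro i hi
      rw [← mul_assoc, ENNReal.mul_div_cancel hT0 hT]
    have h2 : ∑ i ∈ s, t i * x i = T * ∑ i ∈ s, (t i / T) * x i := by
      rw [Finset.mul_sum]; exact Finset.sum_congr rfl hrw
    have hrw' : ∀ i ∈ s, t i * x i ^ q = T * ((t i / T) * x i ^ q) := by
      intro i hi
      rw [← mul_assoc, ENNReal.mul_div_cancel hT0 hT]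
    have h3 : ∑ i ∈ s, t i * x i ^ q = T * ∑ i ∈ s, (t i / T) * x i ^ q := by
      rw [Finset.mul_sum]; exact Finset.sum_congr rfl hrw'
    calc (∑ i ∈ s, t i * x i) ^ q = (T * ∑ i ∈ s, (t i / T) * x i) ^ q := by rw [h2]
      _ = T ^ q * (∑ i ∈ s, (t i / T) * x i) ^ q :=
          ENNReal.mul_rpow_of_nonneg _ _ (by linarith)
      _ ≤ T ^ q * ∑ i ∈ s, (t i / T) * x i ^ q := mul_le_mul_right key _
      _ = T ^ (q - 1) * (T * ∑ i ∈ s, (t i / T) * x i ^ q) := by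
          rw [← mul_assoc, rpow_sub_one_mul hT0 hT]
      _ = T ^ (q - 1) * ∑ i ∈ s, t i * x i ^ q := by rw [← h3]

lemma aux_schur {ι κ : Type*} (G' : Finset κ) (t : ι → κ → ℝ≥0∞) (x : κ → ℝ≥0∞)
    (μ : ℝ≥0∞) (p : ℝ≥0∞) (hp : 1 ≤ p) (hμ0 : μ ≠ 0) (hμt : μ ≠ ∞)
    (hrow : ∀ i, ∑ j ∈ G', t i j ≤ μ) (hcol : ∀ j ∈ G', ∑' i, t i j ≤ μ) :
    seqNormE p (fun i => ∑ j ∈ G', t i j * x j) ≤ μ * seqNormE p x := by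
  classical
  unfold seqNormE
  split_ifs with hptop
  · apply iSup_le
    intro i
    calc ∑ j ∈ G', t i j * x j ≤ ∑ j ∈ G', t i j * ⨆ j', x j' :=
        Finset.sum_le_sum (fun j _ => mul_le_mul_right (le_iSup x j) _)
      _ = (∑ j ∈ G', t i j) * ⨆ j', x j' := by rw [Finset.sum_mul]
      _ ≤ μ * ⨆ j', x j' := mul_le_mul_left (hrow i) _
  · set q := p.toReal with hqdef
    have hp0 : p ≠ 0 := by intro h; rw [h] at hp; simp at hp
    have hq1 : 1 ≤ q := by
      rw [hqdef, ← ENNReal.toReal_one]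
      exact ENNReal.toReal_mono hptop hp
    have hq0 : q ≠ 0 := by linarith
    have key : ∑' i, (∑ j ∈ G', t i j * x j) ^ q ≤ μ ^ q * ∑' j, x j ^ q := by
      calc ∑' i, (∑ j ∈ G', t i j * x j) ^ q
          ≤ ∑' i, μ ^ (q - 1) * ∑ j ∈ G', t i j * x j ^ q := by
            apply ENNReal.tsum_le_tsum
            intro i
            refine le_trans (aux_jensen G' (t i) x hq1 (lt_of_le_of_lt (hrow i) (lt_top_iff_ne_top.2 hμt)).ne) ?_
            exact mul_le_mul_left (ENNReal.rpow_le_rpow (hrow i) (by linarith)) _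
        _ = μ ^ (q - 1) * ∑' i, ∑ j ∈ G', t i j * x j ^ q := ENNReal.tsum_mul_left
        _ = μ ^ (q - 1) * ∑ j ∈ G', x j ^ q * ∑' i, t i j := by
            rw [Summable.tsum_finsetSum (fun j _ => ENNReal.summable)]
            congr 1
            exact Finset.sum_congr rfl (fun j _ => by
              rw [tsum_congr (fun i => mul_comm (t i j) (x j ^ q)), ENNReal.tsum_mul_left])
        _ ≤ μ ^ (q - 1) * ∑ j ∈ G', x j ^ q * μ := by
            exact mul_le_mul_right (Finset.sum_le_sum fun j hj => mul_le_mul_right (hcol j hj) _) _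
        _ = μ ^ (q - 1) * μ * ∑ j ∈ G', x j ^ q := by
            rw [← Finset.sum_mul, mul_comm (∑ j ∈ G', x j ^ q) μ, mul_assoc]
        _ ≤ μ ^ q * ∑' j, x j ^ q := by
            exact mul_le_mul' (le_of_eq (rpow_sub_one_mul hμ0 hμt q)) (ENNReal.sum_le_tsum _)
    calc (∑' i, (∑ j ∈ G', t i j * x j) ^ q) ^ (1 / q)
        ≤ (μ ^ q * ∑' j, x j ^ q) ^ (1 / q) :=
          ENNReal.rpow_le_rpow key (by positivity)
      _ = μ * (∑' j, x j ^ q) ^ (1 / q) := by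
          rw [ENNReal.mul_rpow_of_nonneg _ _ (by positivity), ← ENNReal.rpow_mul]
          rw [mul_one_div_cancel hq0, ENNReal.rpow_one]


lemma aux_row {d : ℕ} (Λ' : Set (Fin d → ℝ)) (G' : Finset Λ') (s' : (Fin d → ℤ) → ℝ≥0∞)
    (z : Fin d → ℝ) :
    ∑ l' ∈ G', s' (fun i => ⌊z i - (l' : Fin d → ℝ) i⌋) ≤ relSep Λ' * ∑' k, s' k := by
  classical
  rw [Finset.sum_comp s' (fun l' : Λ' => (fun i => ⌊z i - (l' : Fin d → ℝ) i⌋ : Fin d → ℤ))]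
  have hcard : ∀ b : Fin d → ℤ,
      ((G'.filter (fun l' : Λ' => (fun i => ⌊z i - (l' : Fin d → ℝ) i⌋) = b)).card : ℝ≥0∞)
        ≤ relSep Λ' := by
    intro b
    apply aux_card_le Λ' _ (z - fun i => (b i : ℝ))
    intro l hl
    rw [Finset.mem_filter] at hl
    intro i
    have : ⌊z i - (l : Fin d → ℝ) i⌋ = b i := congrFun hl.2 i
    have h1 : (b i : ℝ) ≤ z i - (l : Fin d → ℝ) i := this ▸ Int.floor_le _
    have h2 : z i - (l : Fin d → ℝ) i < b i + 1 := this ▸ Int.lt_floor_add_one _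
    simp only [Pi.sub_apply]
    constructor <;> simp <;> linarith
  calc ∑ b ∈ _, _ ≤ ∑ b ∈ Finset.image (fun l' : Λ' => (fun i => ⌊z i - (l' : Fin d → ℝ) i⌋ : Fin d → ℤ)) G',
        relSep Λ' * s' b := by
        apply Finset.sum_le_sum
        intro b _
        rw [nsmul_eq_mul]
        exact mul_le_mul_left (hcard b) _
    _ = relSep Λ' * ∑ b ∈ _, s' b := by rw [Finset.mul_sum]
    _ ≤ relSep Λ' * ∑' k, s' k := mul_le_mul_right (ENNReal.sum_le_tsum _) _

lemma aux_col {d : ℕ} (Λ : Set (Fin d → ℝ)) (s' : (Fin d → ℤ) → ℝ≥0∞) (y : Fin d → ℝ) :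
    ∑' l : Λ, s' (fun i => ⌊(l : Fin d → ℝ) i - y i⌋) ≤ 2 ^ d * relSep Λ * ∑' k, s' k := by
  classical
  have h1 : ∀ l : Λ, s' (fun i => ⌊(l : Fin d → ℝ) i - y i⌋)
      = ∑' k : Fin d → ℤ, (if (fun i => ⌊(l : Fin d → ℝ) i - y i⌋) = k then s' k else 0) := by
    intro l
    rw [tsum_eq_single (fun i => ⌊(l : Fin d → ℝ) i - y i⌋) (fun b' hb' => if_neg (fun h => hb' h.symm))]
    simp
  calc ∑' l : Λ, s' (fun i => ⌊(l : Fin d → ℝ) i - y i⌋)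
      = ∑' (l : Λ) (k : Fin d → ℤ), (if (fun i => ⌊(l : Fin d → ℝ) i - y i⌋) = k then s' k else 0) :=
        tsum_congr h1
    _ = ∑' (k : Fin d → ℤ) (l : Λ), (if (fun i => ⌊(l : Fin d → ℝ) i - y i⌋) = k then s' k else 0) :=
        ENNReal.tsum_comm
    _ ≤ ∑' (k : Fin d → ℤ), s' k * (2 ^ d * relSep Λ) := by
        apply ENNReal.tsum_le_tsum
        intro k
        have : ∀ l : Λ, (if (fun i => ⌊(l : Fin d → ℝ) i - y i⌋) = k then s' k else 0)
            = s' k * (if (fun i => ⌊(l : Fin d → ℝ) i - y i⌋) = k then 1 else 0) := by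
          intro l; split_ifs <;> simp
        rw [tsum_congr this, ENNReal.tsum_mul_left]
        exact mul_le_mul_right (aux_cover Λ y k) _
    _ = (∑' k, s' k) * (2 ^ d * relSep Λ) := ENNReal.tsum_mul_right
    _ = 2 ^ d * relSep Λ * ∑' k, s' k := mul_comm _ _


lemma aux_tail {α : Type*} [DecidableEq α] (f : α → ℝ≥0∞) (hf : ∑' x, f x ≠ ∞) (δ : ℝ≥0∞) (hδ : δ ≠ 0) :
    ∃ S : Finset α, ∑' x : α, (if x ∈ S then 0 else f x) ≤ δ := by
  classical
  set total := ∑' x, f x with htotal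
  by_cases htot : total ≤ δ
  · refine ⟨∅, le_trans ?_ htot⟩
    rw [htotal]
    exact ENNReal.tsum_le_tsum (fun x => by simp)
  · push_neg at htot
    have htot0 : total ≠ 0 := (lt_of_le_of_lt ((zero_le : 0 ≤ δ)) htot).ne'
    have hlt : total - δ < total := ENNReal.sub_lt_self hf htot0 hδ
    obtain ⟨S, hS⟩ := lt_iSup_iff.mp (lt_of_lt_of_le hlt (le_of_eq ENNReal.tsum_eq_iSup_sum))
    refine ⟨S, ?_⟩
    have hsum_ne : ∑ x ∈ S, f x ≠ ∞ := fun h => hf (top_le_iff.mp (h ▸ ENNReal.sum_le_tsum S))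
    have hsplit : ∑' x : α, (if x ∈ S then 0 else f x) + ∑ x ∈ S, f x = total := by
      have h1 : ∑' x : α, (if x ∈ S then f x else 0) = ∑ x ∈ S, f x := by
        rw [tsum_eq_sum (fun b hb => if_neg hb)]
        exact Finset.sum_congr rfl (fun b hb => if_pos hb)
      rw [← h1, ← ENNReal.tsum_add]
      exact tsum_congr (fun x => by split_ifs <;> simp)
    have htail : ∑' x : α, (if x ∈ S then 0 else f x) = total - ∑ x ∈ S, f x :=
      ENNReal.eq_sub_of_add_eq hsum_ne hsplit
    rw [htail]
    calc total - ∑ x ∈ S, f x ≤ total - (total - δ) := tsub_le_tsub_left hS.le total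
      _ = δ := ENNReal.sub_sub_cancel hf htot.le


lemma natAbs_large₁ (B : ℕ) (m : ℤ) (h : (B : ℤ) + 1 ≤ m) : B + 1 ≤ m.natAbs := by omega

lemma natAbs_large₂ (B : ℕ) (m : ℤ) (h : m ≤ -((B : ℤ) + 2)) : B + 1 ≤ m.natAbs := by omega

/-- **Necessary density condition for stability.** Let `Λ, Λ'` be relatively-separated
subsets of `ℝ^d`. If some matrix `A ∈ C(Λ,Λ')` has `ℓ^p`-stability for some
`1 ≤ p ≤ ∞`, then there is `R₀ > 0` such that for every bounded set `K ⊆ ℝ^d`, the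
cardinality of `Λ ∩ B(K,R₀)` is at least the cardinality of `Λ' ∩ K`, where `B(K,R)`
is the set of points at distance less than `R` from `K`. -/
theorem sjostrand_stability_density {d : ℕ}
    (Λ Λ' : Set (Fin d → ℝ)) (hΛ : relSep Λ < ∞) (hΛ' : relSep Λ' < ∞)
    (a : Λ → Λ' → ℂ) (ha : sjNorm a < ∞)
    (p : ℝ≥0∞) (hp : 1 ≤ p)
    (hstab : HasStability p (matApply a)) :
    ∃ R₀ : ℝ, 0 < R₀ ∧
      ∀ K : Set (Fin d → ℝ), Bornology.IsBounded K →
        (Λ' ∩ K).encard ≤ (Λ ∩ Metric.thickening R₀ K).encard := by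
  classical
  obtain ⟨C, hC0, hCtop, hC⟩ := hstab
  have hCinv0 : C⁻¹ ≠ 0 := by
    simp only [ne_eq, ENNReal.inv_eq_zero]
    exact hCtop.ne
  have hCinvt : C⁻¹ ≠ ∞ := by
    simp only [ne_eq, ENNReal.inv_eq_top]
    exact hC0.ne'
  set μ : ℝ≥0∞ := C⁻¹ / 2 with hμdef
  have hμ0 : μ ≠ 0 := (ENNReal.div_pos hCinv0 (by norm_num)).ne'
  have hμt : μ ≠ ∞ := (ENNReal.div_lt_top hCinvt (by norm_num)).ne
  set W : ℝ≥0∞ := 2 ^ d * (relSep Λ + relSep Λ' + 1) with hWdef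
  have h2d : (1 : ℝ≥0∞) ≤ 2 ^ d := one_le_pow_of_one_le' one_le_two d
  have hW0 : W ≠ 0 := by
    rw [hWdef]
    apply mul_ne_zero (pow_ne_zero d (by norm_num))
    intro h
    have h1 : (1 : ℝ≥0∞) ≤ relSep Λ + relSep Λ' + 1 := le_add_self
    rw [h] at h1
    simp at h1
  have hWt : W ≠ ∞ := by
    rw [hWdef]
    apply ENNReal.mul_ne_top (ENNReal.pow_ne_top (by norm_num))
    exact ENNReal.add_ne_top.mpr ⟨ENNReal.add_ne_top.mpr ⟨hΛ.ne, hΛ'.ne⟩, ENNReal.one_ne_top⟩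
  have hΛ'W : relSep Λ' ≤ W := by
    rw [hWdef]
    calc relSep Λ' ≤ relSep Λ + relSep Λ' + 1 := by
          rw [add_assoc]
          calc relSep Λ' ≤ relSep Λ' + 1 := le_self_add
            _ ≤ relSep Λ + (relSep Λ' + 1) := le_add_self
      _ ≤ 2 ^ d * (relSep Λ + relSep Λ' + 1) := le_mul_of_one_le_left (zero_le) h2d
  have hΛW : 2 ^ d * relSep Λ ≤ W := by
    rw [hWdef]
    apply mul_le_mul_right
    rw [add_assoc]
    exact le_self_add
  set δ : ℝ≥0∞ := μ / W with hδdef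
  have hδ0 : δ ≠ 0 := (ENNReal.div_pos hμ0 hWt).ne'
  have hWδ : W * δ = μ := ENNReal.mul_div_cancel hW0 hWt
  set sA : (Fin d → ℤ) → ℝ≥0∞ := fun k => ⨆ (l : Λ) (l' : Λ')
    (_ : (l : Fin d → ℝ) - (l' : Fin d → ℝ) ∈ unitCube k), (‖a l l'‖₊ : ℝ≥0∞) with hsA
  have hsAtot : ∑' k, sA k ≠ ∞ := ha.ne
  obtain ⟨S, hS⟩ := aux_tail sA hsAtot δ hδ0
  set s' : (Fin d → ℤ) → ℝ≥0∞ := fun k => if k ∈ S then 0 else sA k with hs'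
  set Bm : ℕ := S.sup (fun k => Finset.univ.sup fun i => (k i).natAbs) with hBmdef
  have hBm : ∀ k ∈ S, ∀ i, (k i).natAbs ≤ Bm := fun k hk i =>
    le_trans (Finset.le_sup (f := fun i => (k i).natAbs) (Finset.mem_univ i))
      (Finset.le_sup (f := fun k => Finset.univ.sup fun i => (k i).natAbs) hk)
  set R₀ : ℝ := (Bm : ℝ) + 2 with hR₀def
  have hR₀pos : 0 < R₀ := by rw [hR₀def]; positivity
  refine ⟨R₀, hR₀pos, ?_⟩
  intro K _
  by_contra hcon
  push_neg at hcon
  set Fs : Set (Fin d → ℝ) := Λ ∩ Metric.thickening R₀ K with hFsdef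
  have hFfin : Fs.Finite := Set.encard_ne_top_iff.mp hcon.ne_top
  set n : ℕ := hFfin.toFinset.card with hn
  have hFcard : Fs.encard = n := hFfin.encard_eq_coe_toFinset_card
  have hle : Fs.encard + 1 ≤ (Λ' ∩ K).encard := (ENat.add_one_le_iff hcon.ne_top).mpr hcon
  rw [hFcard] at hle
  obtain ⟨F', hF'sub, hF'card⟩ := Set.exists_subset_encard_eq hle
  have hF'fin : F'.Finite := by
    rw [← Set.encard_ne_top_iff, hF'card]
    intro h
    have : ((n + 1 : ℕ) : ℕ∞) = ⊤ := by push_cast; exact_mod_cast h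
    exact ENat.coe_ne_top _ this
  letI : Fintype ↥Fs := hFfin.fintype
  letI : Fintype ↥F' := hF'fin.fintype
  have hcardF : Fintype.card ↥Fs = n := by
    have h1 := Set.encard_eq_coe_toFinset_card Fs
    rw [Set.toFinset_card, hFcard] at h1
    exact_mod_cast h1.symm
  have hcardF' : Fintype.card ↥F' = n + 1 := by
    have h1 := Set.encard_eq_coe_toFinset_card F'
    rw [Set.toFinset_card, hF'card] at h1
    have h2 : ((n + 1 : ℕ) : ℕ∞) = (Fintype.card ↥F' : ℕ∞) := by push_cast; exact_mod_cast h1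
    exact_mod_cast h2.symm
  set e : ↥F' → ↥Λ' := fun jj => ⟨jj.1, (hF'sub jj.2).1⟩ with he
  have he_inj : Function.Injective e := by
    intro x y h
    have h1 : (e x : Fin d → ℝ) = (e y : Fin d → ℝ) := congrArg Subtype.val h
    exact Subtype.ext h1
  set Mmat : Matrix ↥Fs ↥F' ℂ := fun f jj => a ⟨f.1, f.2.1⟩ (e jj) with hM
  have hnotinj : ¬ Function.Injective (Mmat.mulVecLin) := by
    intro h
    have h1 := LinearMap.finrank_le_finrank_of_injective h
    rw [Module.finrank_fintype_fun_eq_card, Module.finrank_fintype_fun_eq_card,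
      hcardF, hcardF'] at h1
    exact Nat.not_succ_le_self n h1
  obtain ⟨v1, v2, hv12, hv_ne⟩ := Function.not_injective_iff.mp hnotinj
  set v : ↥F' → ℂ := v1 - v2 with hv
  have hv0 : v ≠ 0 := sub_ne_zero.mpr hv_ne
  have hker : Mmat.mulVec v = 0 := by
    have h1 : Mmat.mulVecLin v = 0 := by rw [hv, map_sub, hv12, sub_self]
    rwa [Matrix.mulVecLin_apply] at h1
  set c : ↥Λ' → ℂ := fun l' => if h : (l' : Fin d → ℝ) ∈ F' then v ⟨l', h⟩ else 0 with hc
  set G' : Finset ↥Λ' := Finset.image e Finset.univ with hG'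
  have hG'mem : ∀ b : ↥Λ', b ∈ G' ↔ (b : Fin d → ℝ) ∈ F' := by
    intro b
    constructor
    · intro hb
      obtain ⟨jj, _, rfl⟩ := Finset.mem_image.mp hb
      exact jj.2
    · intro hb
      exact Finset.mem_image.mpr ⟨⟨b.1, hb⟩, Finset.mem_univ _, Subtype.ext rfl⟩
  have hc_zero : ∀ b : ↥Λ', b ∉ G' → c b = 0 := fun b hb =>
    dif_neg (fun h => hb ((hG'mem b).mpr h))
  have heval : ∀ l : ↥Λ, matApply a c l = ∑ j ∈ G', a l j * c j := by
    intro l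
    exact tsum_eq_sum (fun b hb => by rw [hc_zero b hb, mul_zero])
  have hc_e : ∀ jj : ↥F', c (e jj) = v jj := by
    intro jj
    rw [hc]
    exact dif_pos jj.2
  have hker' : ∀ l : ↥Λ, (l : Fin d → ℝ) ∈ Metric.thickening R₀ K → matApply a c l = 0 := by
    intro l hl
    rw [heval l, hG', Finset.sum_image (fun x _ y _ h => he_inj h)]
    have h3 : Mmat.mulVec v ⟨l.1, ⟨l.2, hl⟩⟩ = ∑ jj : ↥F', a l (e jj) * c (e jj) := by
      simp only [Matrix.mulVec, dotProduct, hM]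
      exact Finset.sum_congr rfl (fun jj _ => by rw [hc_e jj])
    calc ∑ jj : ↥F', a l (e jj) * c (e jj) = Mmat.mulVec v ⟨l.1, ⟨l.2, hl⟩⟩ := h3.symm
      _ = 0 := congrFun hker _
  set x : ↥Λ' → ℝ≥0∞ := fun j => (‖c j‖₊ : ℝ≥0∞) with hx
  set t : ↥Λ → ↥Λ' → ℝ≥0∞ := fun l j =>
    if (l : Fin d → ℝ) ∈ Metric.thickening R₀ K then 0
    else s' (fun i => ⌊(l : Fin d → ℝ) i - (j : Fin d → ℝ) i⌋) with ht
  have hrow : ∀ l : ↥Λ, ∑ j ∈ G', t l j ≤ μ := by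
    intro l
    have h1 : ∑ j ∈ G', t l j
        ≤ ∑ j ∈ G', s' (fun i => ⌊(l : Fin d → ℝ) i - (j : Fin d → ℝ) i⌋) := by
      apply Finset.sum_le_sum
      intro j _
      simp only [ht]
      split_ifs
      exacts [zero_le, le_rfl]
    refine h1.trans ((aux_row Λ' G' s' _).trans ?_)
    calc relSep Λ' * ∑' k, s' k ≤ W * δ := mul_le_mul' hΛ'W hS
      _ = μ := hWδ
  have hcol : ∀ j ∈ G', ∑' l : ↥Λ, t l j ≤ μ := by
    intro j _
    have h1 : ∑' l : ↥Λ, t l j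
        ≤ ∑' l : ↥Λ, s' (fun i => ⌊(l : Fin d → ℝ) i - (j : Fin d → ℝ) i⌋) := by
      apply ENNReal.tsum_le_tsum
      intro l
      simp only [ht]
      split_ifs
      exacts [zero_le, le_rfl]
    refine h1.trans ((aux_col Λ s' _).trans ?_)
    calc 2 ^ d * relSep Λ * ∑' k, s' k ≤ W * δ := mul_le_mul' hΛW hS
      _ = μ := hWδ
  have hfar : ∀ l : ↥Λ, (l : Fin d → ℝ) ∉ Metric.thickening R₀ K → ∀ j ∈ G',
      (fun i => ⌊(l : Fin d → ℝ) i - (j : Fin d → ℝ) i⌋ : Fin d → ℤ) ∉ S := by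
    intro l hl j hj
    have hjK : (j : Fin d → ℝ) ∈ K := (hF'sub ((hG'mem j).mp hj)).2
    have hdist : R₀ ≤ dist (l : Fin d → ℝ) (j : Fin d → ℝ) := by
      by_contra h'
      push_neg at h'
      exact hl (Metric.mem_thickening_iff.mpr ⟨(j : Fin d → ℝ), hjK, h'⟩)
    have hex : ∃ i, R₀ ≤ dist ((l : Fin d → ℝ) i) ((j : Fin d → ℝ) i) := by
      by_contra hno
      push_neg at hno
      exact absurd ((dist_pi_lt_iff hR₀pos).mpr hno) (not_lt.mpr hdist)
    obtain ⟨i, hi⟩ := hex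
    rw [Real.dist_eq] at hi
    intro hmem
    have hpart := hBm _ hmem i
    have hgoal : Bm + 1 ≤ (⌊(l : Fin d → ℝ) i - (j : Fin d → ℝ) i⌋).natAbs := by
      have hi2 : (Bm : ℝ) + 2 ≤ |(l : Fin d → ℝ) i - (j : Fin d → ℝ) i| := by
        rw [hR₀def] at hi
        exact hi
      rcases abs_cases ((l : Fin d → ℝ) i - (j : Fin d → ℝ) i) with ⟨h1, h2⟩ | ⟨h1, h2⟩
      · refine natAbs_large₁ Bm _ (Int.le_floor.mpr ?_)
        push_cast
        linarith
      · refine natAbs_large₂ Bm _ ?_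
        have h3 : (⌊(l : Fin d → ℝ) i - (j : Fin d → ℝ) i⌋ : ℝ) ≤ -((Bm : ℝ) + 2) :=
          le_trans (Int.floor_le _) (by linarith)
        exact_mod_cast h3
    exact Nat.not_succ_le_self Bm (hgoal.trans hpart)
  have hpt : ∀ l : ↥Λ, (‖matApply a c l‖₊ : ℝ≥0∞) ≤ ∑ j ∈ G', t l j * x j := by
    intro l
    by_cases hl : (l : Fin d → ℝ) ∈ Metric.thickening R₀ K
    · rw [hker' l hl]
      simp
    · rw [heval l]
      calc (‖∑ j ∈ G', a l j * c j‖₊ : ℝ≥0∞)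
          ≤ ∑ j ∈ G', (‖a l j * c j‖₊ : ℝ≥0∞) := by
            rw [← ENNReal.coe_finset_sum]
            exact ENNReal.coe_le_coe.mpr (nnnorm_sum_le _ _)
        _ = ∑ j ∈ G', (‖a l j‖₊ : ℝ≥0∞) * x j := by
            refine Finset.sum_congr rfl (fun j _ => ?_)
            rw [nnnorm_mul, ENNReal.coe_mul]
        _ ≤ ∑ j ∈ G', t l j * x j := by
            refine Finset.sum_le_sum (fun j hj => mul_le_mul_left ?_ _)
            have hcube : (l : Fin d → ℝ) - (j : Fin d → ℝ)
                ∈ unitCube (fun i => ⌊(l : Fin d → ℝ) i - (j : Fin d → ℝ) i⌋) :=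
              mem_unitCube_floor _
            have hsa : (‖a l j‖₊ : ℝ≥0∞)
                ≤ sA (fun i => ⌊(l : Fin d → ℝ) i - (j : Fin d → ℝ) i⌋) :=
              le_iSup_of_le l (le_iSup_of_le j (le_iSup_of_le hcube le_rfl))
            show (‖a l j‖₊ : ℝ≥0∞) ≤ if (l : Fin d → ℝ) ∈ Metric.thickening R₀ K then 0
              else s' (fun i => ⌊(l : Fin d → ℝ) i - (j : Fin d → ℝ) i⌋)
            rw [if_neg hl]
            rw [show s' (fun i => ⌊(l : Fin d → ℝ) i - (j : Fin d → ℝ) i⌋)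
              = sA (fun i => ⌊(l : Fin d → ℝ) i - (j : Fin d → ℝ) i⌋)
              from if_neg (hfar l hl j hj)]
            exact hsa
  have hq1 : p ≠ ∞ → 1 ≤ p.toReal := fun h => by
    rw [← ENNReal.toReal_one]
    exact ENNReal.toReal_mono h hp
  have hNfin : seqNorm p c < ∞ := by
    unfold seqNorm seqNormE
    split_ifs with hptop
    · refine lt_of_le_of_lt (iSup_le fun j => ?_)
        (?_ : ∑ j ∈ G', (‖c j‖₊ : ℝ≥0∞) < ∞)
      · show (‖c j‖₊ : ℝ≥0∞) ≤ ∑ j ∈ G', (‖c j‖₊ : ℝ≥0∞)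
        by_cases hj : j ∈ G'
        · exact Finset.single_le_sum (f := fun j => (‖c j‖₊ : ℝ≥0∞)) (fun _ _ => zero_le) hj
        · rw [hc_zero j hj]
          simp
      · exact ENNReal.sum_lt_top.mpr (fun j _ => ENNReal.coe_lt_top)
    · have hq := hq1 hptop
      have h1 : ∑' j : ↥Λ', (‖c j‖₊ : ℝ≥0∞) ^ p.toReal
          = ∑ j ∈ G', (‖c j‖₊ : ℝ≥0∞) ^ p.toReal := by
        refine tsum_eq_sum (fun b hb => ?_)
        rw [hc_zero b hb]
        simp only [nnnorm_zero, ENNReal.coe_zero]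
        exact ENNReal.zero_rpow_of_pos (by linarith)
      show (∑' j : ↥Λ', (‖c j‖₊ : ℝ≥0∞) ^ p.toReal) ^ (1 / p.toReal) < ∞
      rw [h1]
      refine ENNReal.rpow_lt_top_of_nonneg (by positivity) ?_
      exact (ENNReal.sum_lt_top.mpr (fun j _ =>
        ENNReal.rpow_lt_top_of_nonneg (by linarith) ENNReal.coe_ne_top)).ne
  obtain ⟨jj0, hjj0⟩ := Function.ne_iff.mp hv0
  have hcl : c (e jj0) = v jj0 := hc_e jj0
  have hxpos : x (e jj0) ≠ 0 := by
    show (‖c (e jj0)‖₊ : ℝ≥0∞) ≠ 0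
    simp only [ne_eq, ENNReal.coe_eq_zero, nnnorm_eq_zero]
    rw [hcl]
    exact hjj0
  have hxle : x (e jj0) ≤ seqNorm p c := by
    unfold seqNorm seqNormE
    split_ifs with hptop
    · show x (e jj0) ≤ ⨆ j, (‖c j‖₊ : ℝ≥0∞)
      exact le_iSup (fun j => (‖c j‖₊ : ℝ≥0∞)) (e jj0)
    · have hq := hq1 hptop
      have hq0 : p.toReal ≠ 0 := by linarith
      show x (e jj0) ≤ (∑' j : ↥Λ', (‖c j‖₊ : ℝ≥0∞) ^ p.toReal) ^ (1 / p.toReal)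
      calc x (e jj0) = ((x (e jj0)) ^ p.toReal) ^ (1 / p.toReal) := by
            rw [← ENNReal.rpow_mul, mul_one_div_cancel hq0, ENNReal.rpow_one]
        _ ≤ _ := ENNReal.rpow_le_rpow
            (ENNReal.le_tsum (f := fun j : ↥Λ' => (‖c j‖₊ : ℝ≥0∞) ^ p.toReal) (e jj0))
            (by positivity)
  have hN0 : seqNorm p c ≠ 0 := fun h => hxpos (le_antisymm (h ▸ hxle) (zero_le))
  have hupper : seqNorm p (matApply a c) ≤ μ * seqNorm p c := by
    have h1 : seqNorm p (matApply a c) ≤ seqNormE p (fun l => ∑ j ∈ G', t l j * x j) :=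
      seqNormE_mono p hpt
    exact h1.trans (aux_schur G' t x μ p hp hμ0 hμt hrow hcol)
  obtain ⟨hlow, _⟩ := hC c hNfin
  have hfinal : C⁻¹ * seqNorm p c ≤ μ * seqNorm p c := hlow.trans hupper
  have hstrict : μ * seqNorm p c < C⁻¹ * seqNorm p c := by
    rw [ENNReal.mul_lt_mul_iff_left hN0 hNfin.ne, hμdef]
    exact ENNReal.half_lt_self hCinv0 hCinvt
  exact absurd hfinal (not_le.mpr hstrict)
end

section
/- Let 1 ≤ p ≤ ∞, let Λ and Λ' be relatively-separated subsets of ℝ^d, and let A = (a(λ,λ'))_{λ∈Λ,λ'∈Λ'} be a matrix in the Sjöstrand class C(Λ,Λ'). Then A is a bounded operator from ℓ^p(Λ') to ℓ^p(Λ), and there exists a constant C depending only on d and p such that ‖Ac‖_{ℓ^p(Λ)} ≤ C R(Λ)^{1/p} R(Λ')^{1−1/p} ‖A‖_C ‖c‖_{ℓ^p(Λ')} for all c ∈ ℓ^p(Λ'). -/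
open scoped ENNReal NNReal

noncomputable def ind0 {d : ℕ} (z : Fin d → ℝ) : ℝ≥0∞ :=
  (unitCube (0 : Fin d → ℤ)).indicator (fun _ => (1 : ℝ≥0∞)) z

section SjAux
variable {d : ℕ}

lemma sj_mem_unitCube_floor (x : Fin d → ℝ) : x ∈ unitCube (fun i => ⌊x i⌋) :=
  fun i => ⟨Int.floor_le _, Int.lt_floor_add_one _⟩

lemma sj_mem_unitCube_iff (x : Fin d → ℝ) (k : Fin d → ℤ) :
    x ∈ unitCube k ↔ (fun i => ⌊x i⌋) = k := by
  constructor
  · intro h; funext i; exact Int.floor_eq_iff.mpr ⟨(h i).1, (h i).2⟩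
  · rintro rfl; exact sj_mem_unitCube_floor x

lemma sj_sub_mem_iff (x : Fin d → ℝ) (k : Fin d → ℤ) :
    (x - fun i => (k i : ℝ)) ∈ unitCube (0 : Fin d → ℤ) ↔ x ∈ unitCube k := by
  unfold unitCube
  simp only [Set.mem_setOf_eq, Pi.sub_apply, Pi.zero_apply, Int.cast_zero, zero_add]
  constructor
  · intro h i; have hi := h i; constructor <;> linarith [hi.1, hi.2]
  · intro h i; have hi := h i; constructor <;> linarith [hi.1, hi.2]

lemma ind0_of_mem {z : Fin d → ℝ} (h : z ∈ unitCube (0 : Fin d → ℤ)) : ind0 z = 1 :=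
  Set.indicator_of_mem h _

lemma ind0_of_not_mem {z : Fin d → ℝ} (h : z ∉ unitCube (0 : Fin d → ℤ)) : ind0 z = 0 :=
  Set.indicator_of_notMem h _

lemma tsum_ind0_le (Λ : Set (Fin d → ℝ)) (x : Fin d → ℝ) :
    ∑' l : Λ, ind0 (x - (l : Fin d → ℝ)) ≤ relSep Λ :=
  le_iSup (fun x => ∑' l : Λ, ind0 (x - (l : Fin d → ℝ))) x

lemma tsum_ind0_shift_le (Λ : Set (Fin d → ℝ)) (y : Fin d → ℝ) :
    ∑' l : Λ, ind0 ((l : Fin d → ℝ) - y) ≤ 2 ^ d * relSep Λ := by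
  classical
  have key : ∀ l : Λ, ind0 ((l : Fin d → ℝ) - y) ≤
      ∑ e : Fin d → Fin 2, ind0 ((y + fun i => ((e i : ℕ) : ℝ)) - (l : Fin d → ℝ)) := by
    intro l
    by_cases h : ((l : Fin d → ℝ) - y) ∈ unitCube (0 : Fin d → ℤ)
    · set e : Fin d → Fin 2 := fun i => if (l : Fin d → ℝ) i - y i ≤ 0 then 0 else 1 with he
      have hmem : (y + fun i => ((e i : ℕ) : ℝ)) - (l : Fin d → ℝ) ∈ unitCube (0 : Fin d → ℤ) := by
        intro i
        have hi := h i
        simp only [Pi.sub_apply, Pi.zero_apply, Int.cast_zero, zero_add, Pi.add_apply] at hi ⊢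
        by_cases hc : (l : Fin d → ℝ) i - y i ≤ 0
        · simp only [he, if_pos hc, Fin.val_zero, Nat.cast_zero]
          constructor <;> linarith [hi.1, hi.2]
        · simp only [he, if_neg hc, Fin.val_one, Nat.cast_one]
          push_neg at hc
          constructor <;> linarith [hi.1, hi.2]
      rw [ind0_of_mem h, ← ind0_of_mem hmem]
      exact Finset.single_le_sum
        (f := fun e : Fin d → Fin 2 => ind0 ((y + fun i => ((e i : ℕ) : ℝ)) - (l : Fin d → ℝ)))
        (fun _ _ => zero_le) (Finset.mem_univ e)
    · rw [ind0_of_not_mem h]; exact zero_le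
  calc ∑' l : Λ, ind0 ((l : Fin d → ℝ) - y)
      ≤ ∑' l : Λ, ∑ e : Fin d → Fin 2, ind0 ((y + fun i => ((e i : ℕ) : ℝ)) - (l : Fin d → ℝ)) :=
        ENNReal.tsum_le_tsum key
    _ = ∑ e : Fin d → Fin 2, ∑' l : Λ, ind0 ((y + fun i => ((e i : ℕ) : ℝ)) - (l : Fin d → ℝ)) :=
        Summable.tsum_finsetSum (fun _ _ => ENNReal.summable)
    _ ≤ ∑ e : Fin d → Fin 2, relSep Λ := Finset.sum_le_sum (fun e _ => tsum_ind0_le Λ _)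
    _ = 2 ^ d * relSep Λ := by
        rw [Finset.sum_const, Finset.card_univ, nsmul_eq_mul]
        norm_num [Fintype.card_fun]

lemma sj_floor_expand (z : Fin d → ℝ) (s : (Fin d → ℤ) → ℝ≥0∞) :
    s (fun i => ⌊z i⌋) = ∑' k : Fin d → ℤ, s k * ind0 (z - fun i => (k i : ℝ)) := by
  have h1 : ∑' k : Fin d → ℤ, s k * ind0 (z - fun i => (k i : ℝ))
      = s (fun i => ⌊z i⌋) * ind0 (z - fun i => ((⌊z i⌋ : ℤ) : ℝ)) :=
    tsum_eq_single _ (fun k hk => by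
      rw [ind0_of_not_mem, mul_zero]
      intro hmem
      exact hk (((sj_mem_unitCube_iff z k).mp ((sj_sub_mem_iff z k).mp hmem)).symm))
  rw [h1, ind0_of_mem ((sj_sub_mem_iff z _).mpr (sj_mem_unitCube_floor z)), mul_one]

lemma sj_enorm_tsum_le {ι : Type*} (f : ι → ℂ) :
    (‖∑' i, f i‖₊ : ℝ≥0∞) ≤ ∑' i, (‖f i‖₊ : ℝ≥0∞) := by
  by_cases hf : Summable fun i => ‖f i‖₊
  · rw [← ENNReal.coe_tsum hf]
    exact_mod_cast nnnorm_tsum_le hf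
  · rw [show ∑' i, (‖f i‖₊ : ℝ≥0∞) = ∞ from
      by_contra fun h => hf (ENNReal.tsum_coe_ne_top_iff_summable.mp h)]
    exact le_top

lemma sj_tsum_holder {ι : Type*} (K v : ι → ℝ≥0∞) {q : ℝ} (hq : 1 < q) :
    ∑' j, K j * v j ≤ (∑' j, K j) ^ (1 - 1/q) * (∑' j, K j * v j ^ q) ^ (1/q) := by
  letI : MeasurableSpace ι := ⊤
  haveI : MeasurableSingletonClass ι := ⟨fun _ => trivial⟩
  have hq0 : (0:ℝ) < q := lt_trans one_pos hq
  have hpq : (q / (q-1)).HolderConjugate q := (Real.HolderConjugate.conjExponent hq).symm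
  have hq' : (0:ℝ) < q / (q-1) := hpq.pos
  have hmeas : ∀ f : ι → ℝ≥0∞, Measurable f := fun f s _ => trivial
  have h := ENNReal.lintegral_mul_le_Lp_mul_Lq (MeasureTheory.Measure.count (α := ι)) hpq
    (f := fun j => K j ^ (1/(q/(q-1)))) (g := fun j => K j ^ (1/q) * v j)
    ((hmeas _).aemeasurable) ((hmeas _).aemeasurable)
  rw [MeasureTheory.lintegral_count, MeasureTheory.lintegral_count,
    MeasureTheory.lintegral_count] at h
  have einv : 1/(q/(q-1)) = 1 - 1/q := by
    rw [one_div, one_div]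
    linarith [hpq.inv_add_inv_eq_one]
  have e1 : ∀ j : ι, ((fun j => K j ^ (1/(q/(q-1)))) * fun j => K j ^ (1/q) * v j) j
      = K j * v j := by
    intro j
    have : K j ^ (1/(q/(q-1))) * K j ^ (1/q) = K j := by
      rw [← ENNReal.rpow_add_of_nonneg _ _ (by positivity) (by positivity)]
      rw [einv, sub_add_cancel, ENNReal.rpow_one]
    simp only [Pi.mul_apply, ← mul_assoc, this]
  have e2 : ∀ j : ι, (K j ^ (1/(q/(q-1)))) ^ (q/(q-1)) = K j := by
    intro j
    rw [← ENNReal.rpow_mul, one_div_mul_cancel (ne_of_gt hq'), ENNReal.rpow_one]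
  have e3 : ∀ j : ι, (K j ^ (1/q) * v j) ^ q = K j * v j ^ q := by
    intro j
    rw [ENNReal.mul_rpow_of_nonneg _ _ hq0.le, ← ENNReal.rpow_mul,
      one_div_mul_cancel hq0.ne', ENNReal.rpow_one]
  rw [tsum_congr e1, tsum_congr e2, tsum_congr e3, einv] at h
  exact h

lemma sj_tsum_holder_pow {ι : Type*} (K v : ι → ℝ≥0∞) {q : ℝ} (hq : 1 ≤ q) :
    (∑' j, K j * v j) ^ q ≤ (∑' j, K j) ^ (q - 1) * ∑' j, K j * v j ^ q := by
  rcases eq_or_lt_of_le hq with h1 | h1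
  · rw [← h1]
    simp [ENNReal.rpow_one]
  · have hq0 : (0:ℝ) < q := lt_trans one_pos h1
    have h := ENNReal.rpow_le_rpow (sj_tsum_holder K v h1) hq0.le
    have e1 : (1 - 1/q) * q = q - 1 := by field_simp
    have e2 : (1/q) * q = 1 := one_div_mul_cancel hq0.ne'
    rwa [ENNReal.mul_rpow_of_nonneg _ _ hq0.le, ← ENNReal.rpow_mul, ← ENNReal.rpow_mul,
      e1, e2, ENNReal.rpow_one] at h

end SjAux

/-- **Boundedness of Sjöstrand-class matrices on `ℓ^p`.** For `1 ≤ p ≤ ∞` there is a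
constant `C` depending only on `d` and `p` such that for all relatively-separated
`Λ, Λ' ⊆ ℝ^d`, every matrix `A ∈ C(Λ,Λ')` satisfies
`‖Ac‖_{ℓ^p(Λ)} ≤ C R(Λ)^{1/p} R(Λ')^{1-1/p} ‖A‖_C ‖c‖_{ℓ^p(Λ')}` for all `c ∈ ℓ^p(Λ')`. -/
theorem sjostrand_matrix_bounded (d : ℕ) (p : ℝ≥0∞) (hp : 1 ≤ p) :
    ∃ C : ℝ≥0∞, 0 < C ∧ C < ∞ ∧
      ∀ (Λ Λ' : Set (Fin d → ℝ)), relSep Λ < ∞ → relSep Λ' < ∞ →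
        ∀ a : Λ → Λ' → ℂ, sjNorm a < ∞ →
          ∀ c : Λ' → ℂ, seqNorm p c < ∞ →
            seqNorm p (matApply a c) ≤
              C * relSep Λ ^ (1 / p.toReal) * relSep Λ' ^ (1 - 1 / p.toReal) *
                sjNorm a * seqNorm p c := by
  classical
  have h2d0 : (0 : ℝ≥0∞) < 2 ^ d := lt_of_lt_of_le one_pos (one_le_pow_of_one_le' (by norm_num : (1:ℝ≥0∞) ≤ 2) d)
  have h2dtop : (2 : ℝ≥0∞) ^ d < ∞ := ENNReal.pow_lt_top (by norm_num)
  have h2d1 : (1 : ℝ≥0∞) ≤ 2 ^ d := one_le_pow_of_one_le' (by norm_num : (1:ℝ≥0∞) ≤ 2) d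
  refine ⟨2 ^ d, h2d0, h2dtop, ?_⟩
  intro Λ Λ' hR hR' a hS c hc
  set S : ℝ≥0∞ := sjNorm a with hSdef
  set R : ℝ≥0∞ := relSep Λ with hRdef
  set R' : ℝ≥0∞ := relSep Λ' with hR'def
  set s : (Fin d → ℤ) → ℝ≥0∞ := fun k => ⨆ (l : Λ) (l' : Λ')
    (_ : (l : Fin d → ℝ) - (l' : Fin d → ℝ) ∈ unitCube k), (‖a l l'‖₊ : ℝ≥0∞) with hs
  have hsj : S = ∑' k, s k := rfl
  set K : Λ → Λ' → ℝ≥0∞ :=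
    fun l l' => s (fun i => ⌊((l : Fin d → ℝ) - (l' : Fin d → ℝ)) i⌋) with hK
  set v : Λ' → ℝ≥0∞ := fun l' => (‖c l'‖₊ : ℝ≥0∞) with hv
  have haK : ∀ l l', (‖a l l'‖₊ : ℝ≥0∞) ≤ K l l' := by
    intro l l'
    have hmem := sj_mem_unitCube_floor ((l : Fin d → ℝ) - (l' : Fin d → ℝ))
    exact le_iSup_of_le l (le_iSup_of_le l' (le_iSup_of_le hmem le_rfl))
  have happ : ∀ l : Λ, (‖matApply a c l‖₊ : ℝ≥0∞) ≤ ∑' l' : Λ', K l l' * v l' := by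
    intro l
    refine (sj_enorm_tsum_le _).trans ?_
    refine ENNReal.tsum_le_tsum fun l' => ?_
    rw [show (‖a l l' * c l'‖₊ : ℝ≥0∞) = (‖a l l'‖₊ : ℝ≥0∞) * ‖c l'‖₊ by
      rw [nnnorm_mul, ENNReal.coe_mul]]
    exact mul_le_mul_left (haK l l') _
  have row : ∀ l : Λ, ∑' l' : Λ', K l l' ≤ S * R' := by
    intro l
    calc ∑' l' : Λ', K l l'
        = ∑' l' : Λ', ∑' k, s k * ind0 (((l : Fin d → ℝ) - (l' : Fin d → ℝ))
            - fun i => (k i : ℝ)) := tsum_congr fun l' => sj_floor_expand _ s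
      _ = ∑' k, ∑' l' : Λ', s k * ind0 (((l : Fin d → ℝ) - (l' : Fin d → ℝ))
            - fun i => (k i : ℝ)) := ENNReal.tsum_comm
      _ = ∑' k, s k * ∑' l' : Λ',
            ind0 ((((l : Fin d → ℝ) - fun i => (k i : ℝ))) - (l' : Fin d → ℝ)) := by
          refine tsum_congr fun k => ?_
          rw [ENNReal.tsum_mul_left]
          congr 1
          exact tsum_congr fun l' => by rw [sub_right_comm]
      _ ≤ ∑' k, s k * R' :=
          ENNReal.tsum_le_tsum fun k => mul_le_mul_right (tsum_ind0_le Λ' _) _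
      _ = S * R' := by rw [ENNReal.tsum_mul_right, ← hsj]
  have col : ∀ l' : Λ', ∑' l : Λ, K l l' ≤ 2 ^ d * (R * S) := by
    intro l'
    calc ∑' l : Λ, K l l'
        = ∑' l : Λ, ∑' k, s k * ind0 (((l : Fin d → ℝ) - (l' : Fin d → ℝ))
            - fun i => (k i : ℝ)) := tsum_congr fun l => sj_floor_expand _ s
      _ = ∑' k, ∑' l : Λ, s k * ind0 (((l : Fin d → ℝ) - (l' : Fin d → ℝ))
            - fun i => (k i : ℝ)) := ENNReal.tsum_comm
      _ = ∑' k, s k * ∑' l : Λ,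
            ind0 ((l : Fin d → ℝ) - ((l' : Fin d → ℝ) + fun i => (k i : ℝ))) := by
          refine tsum_congr fun k => ?_
          rw [ENNReal.tsum_mul_left]
          congr 1
          exact tsum_congr fun l => by rw [sub_sub]
      _ ≤ ∑' k, s k * (2 ^ d * R) :=
          ENNReal.tsum_le_tsum fun k => mul_le_mul_right (tsum_ind0_shift_le Λ _) _
      _ = 2 ^ d * (R * S) := by rw [ENNReal.tsum_mul_right, ← hsj]; ring
  by_cases hptop : p = ∞
  · subst hptop
    simp only [seqNorm, seqNormE, if_pos rfl, ENNReal.toReal_top, div_zero,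
      ENNReal.rpow_zero, mul_one, sub_zero, ENNReal.rpow_one]
    refine iSup_le fun l => ?_
    have hM : ∀ l' : Λ', v l' ≤ ⨆ i : Λ', (‖c i‖₊ : ℝ≥0∞) :=
      fun l' => le_iSup (fun i : Λ' => (‖c i‖₊ : ℝ≥0∞)) l'
    set M : ℝ≥0∞ := ⨆ i : Λ', (‖c i‖₊ : ℝ≥0∞) with hM_def
    calc (‖matApply a c l‖₊ : ℝ≥0∞) ≤ ∑' l' : Λ', K l l' * v l' := happ l
      _ ≤ ∑' l' : Λ', K l l' * M :=
          ENNReal.tsum_le_tsum fun l' => mul_le_mul_right (hM l') _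
      _ = (∑' l' : Λ', K l l') * M := ENNReal.tsum_mul_right
      _ ≤ (S * R') * M := mul_le_mul_left (row l) M
      _ ≤ 2 ^ d * R' * S * M := by
          calc S * R' * M ≤ 2 ^ d * (S * R' * M) := le_mul_of_one_le_left' h2d1
            _ = 2 ^ d * R' * S * M := by ring
  · have hq1 : (1:ℝ) ≤ p.toReal := by
      rw [← ENNReal.toReal_one]
      exact ENNReal.toReal_mono hptop hp
    set q : ℝ := p.toReal with hqdef
    have hq0 : (0:ℝ) < q := lt_of_lt_of_le one_pos hq1
    have h1q : (0:ℝ) ≤ 1 / q := by positivity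
    have h1q' : (0:ℝ) ≤ 1 - 1 / q := by
      rw [sub_nonneg, div_le_one hq0]; exact hq1
    have step1 : ∀ l : Λ, (‖matApply a c l‖₊ : ℝ≥0∞) ^ q
        ≤ (S * R') ^ (q - 1) * ∑' l' : Λ', K l l' * v l' ^ q := by
      intro l
      calc (‖matApply a c l‖₊ : ℝ≥0∞) ^ q ≤ (∑' l' : Λ', K l l' * v l') ^ q :=
            ENNReal.rpow_le_rpow (happ l) hq0.le
        _ ≤ (∑' l' : Λ', K l l') ^ (q - 1) * ∑' l' : Λ', K l l' * v l' ^ q :=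
            sj_tsum_holder_pow _ _ hq1
        _ ≤ (S * R') ^ (q - 1) * ∑' l' : Λ', K l l' * v l' ^ q :=
            mul_le_mul_left (ENNReal.rpow_le_rpow (row l) (sub_nonneg.mpr hq1)) _
    set Tc : ℝ≥0∞ := ∑' l' : Λ', v l' ^ q with hTc
    have hT : (∑' l : Λ, (‖matApply a c l‖₊ : ℝ≥0∞) ^ q)
        ≤ (S * R') ^ (q - 1) * (2 ^ d * (R * S)) * Tc := by
      calc (∑' l : Λ, (‖matApply a c l‖₊ : ℝ≥0∞) ^ q)
          ≤ ∑' l : Λ, (S * R') ^ (q - 1) * ∑' l' : Λ', K l l' * v l' ^ q :=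
            ENNReal.tsum_le_tsum step1
        _ = (S * R') ^ (q - 1) * ∑' l : Λ, ∑' l' : Λ', K l l' * v l' ^ q :=
            ENNReal.tsum_mul_left
        _ = (S * R') ^ (q - 1) * ∑' l' : Λ', (∑' l : Λ, K l l') * v l' ^ q := by
            rw [ENNReal.tsum_comm]
            congr 1
            exact tsum_congr fun l' => ENNReal.tsum_mul_right
        _ ≤ (S * R') ^ (q - 1) * ∑' l' : Λ', (2 ^ d * (R * S)) * v l' ^ q := by
            refine mul_le_mul_right (ENNReal.tsum_le_tsum fun l' => ?_) _
            exact mul_le_mul_left (col l') _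
        _ = (S * R') ^ (q - 1) * ((2 ^ d * (R * S)) * Tc) := by
            rw [ENNReal.tsum_mul_left]
        _ = (S * R') ^ (q - 1) * (2 ^ d * (R * S)) * Tc := by ring
    have hseq : seqNorm p (matApply a c)
        = (∑' l : Λ, (‖matApply a c l‖₊ : ℝ≥0∞) ^ q) ^ (1/q) := by
      rw [seqNorm, seqNormE, if_neg hptop]
    have hseqc : seqNorm p c = Tc ^ (1/q) := by
      rw [seqNorm, seqNormE, if_neg hptop]
    have he1 : (q - 1) * (1/q) = 1 - 1/q := by
      field_simp
    have he2 : (1/q) * q = 1 := one_div_mul_cancel hq0.ne'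
    calc seqNorm p (matApply a c)
        = (∑' l : Λ, (‖matApply a c l‖₊ : ℝ≥0∞) ^ q) ^ (1/q) := hseq
      _ ≤ ((S * R') ^ (q - 1) * (2 ^ d * (R * S)) * Tc) ^ (1/q) :=
          ENNReal.rpow_le_rpow hT h1q
      _ = (S ^ (1 - 1/q) * R' ^ (1 - 1/q)) * (((2:ℝ≥0∞) ^ d) ^ (1/q) * (R ^ (1/q) * S ^ (1/q)))
          * Tc ^ (1/q) := by
          rw [ENNReal.mul_rpow_of_nonneg _ _ h1q, ENNReal.mul_rpow_of_nonneg _ _ h1q,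
            ENNReal.mul_rpow_of_nonneg _ _ h1q, ENNReal.mul_rpow_of_nonneg _ _ h1q,
            ← ENNReal.rpow_mul (S * R'), he1, ENNReal.mul_rpow_of_nonneg _ _ h1q']
      _ = (S ^ (1 - 1/q) * S ^ (1/q)) * ((2:ℝ≥0∞) ^ d) ^ (1/q) * R ^ (1/q) * R' ^ (1 - 1/q)
          * Tc ^ (1/q) := by ring
      _ = S * ((2:ℝ≥0∞) ^ d) ^ (1/q) * R ^ (1/q) * R' ^ (1 - 1/q) * Tc ^ (1/q) := by
          rw [← ENNReal.rpow_add_of_nonneg _ _ h1q' h1q, sub_add_cancel, ENNReal.rpow_one]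
      _ ≤ S * (2:ℝ≥0∞) ^ d * R ^ (1/q) * R' ^ (1 - 1/q) * Tc ^ (1/q) := by
          have : ((2:ℝ≥0∞) ^ d) ^ (1/q) ≤ (2:ℝ≥0∞) ^ d := by
            calc ((2:ℝ≥0∞) ^ d) ^ (1/q) ≤ ((2:ℝ≥0∞) ^ d) ^ (1:ℝ) :=
                  ENNReal.rpow_le_rpow_of_exponent_le h2d1 (by rw [div_le_one hq0]; exact hq1)
              _ = (2:ℝ≥0∞) ^ d := ENNReal.rpow_one _
          exact mul_le_mul_left (mul_le_mul_left (mul_le_mul_left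
            (mul_le_mul_right this S) _) _) _
      _ = 2 ^ d * R ^ (1 / p.toReal) * R' ^ (1 - 1 / p.toReal) * S * seqNorm p c := by
          rw [hseqc]; ring
end

section
/- Let 1 ≤ p ≤ ∞, Λ a relatively-separated subset of ℝ^d, and Φ = {φ_λ : λ ∈ Λ} a family of functions with ‖sup_{λ∈Λ} |φ_λ(·+λ)|‖_{W₁} < ∞. Then there exists a constant C depending only on d and p such that ‖S_Φ c‖_p ≤ C R(Λ)^{1−1/p} ‖sup_{λ∈Λ} |φ_λ(·+λ)|‖_{W₁} ‖c‖_{ℓ^p(Λ)} for all c ∈ ℓ^p(Λ). -/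
open scoped ENNReal NNReal

open MeasureTheory

/-- The Wiener amalgam space `W₁` norm of an `ℝ≥0∞`-valued function on `ℝ^d`:
`∑_{k ∈ ℤ^d} sup_{x ∈ k + [0,1)^d} g x`. -/
noncomputable def wienerNorm {d : ℕ} (g : (Fin d → ℝ) → ℝ≥0∞) : ℝ≥0∞ :=
  ∑' k : Fin d → ℤ, ⨆ x ∈ unitCube k, g x

/-- The modulus of continuity `ω_δ(f)(x) = sup_{‖y‖_∞ ≤ δ} |f(x+y) - f(x)|`
(valued in `ℝ≥0∞`; the norm on `Fin d → ℝ` is the sup-norm). -/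
noncomputable def modulus {d : ℕ} (δ : ℝ) (f : (Fin d → ℝ) → ℂ) (x : Fin d → ℝ) : ℝ≥0∞ :=
  ⨆ y ∈ Metric.closedBall (0 : Fin d → ℝ) δ, (‖f (x + y) - f x‖₊ : ℝ≥0∞)

/-- The synthesis operator `S_Φ c = ∑_{λ ∈ Λ} c(λ) φ_λ` has `ℓ^p`-stability: there is a
positive finite `C` with `C⁻¹ ‖c‖_{ℓ^p(Λ)} ≤ ‖S_Φ c‖_{L^p} ≤ C ‖c‖_{ℓ^p(Λ)}`
for all `c ∈ ℓ^p(Λ)`. -/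
def HasSynthesisStability {d : ℕ} {Λ : Set (Fin d → ℝ)} (p : ℝ≥0∞)
    (φ : Λ → (Fin d → ℝ) → ℂ) : Prop :=
  ∃ C : ℝ≥0∞, 0 < C ∧ C < ∞ ∧
    ∀ c : Λ → ℂ, seqNorm p c < ∞ →
      C⁻¹ * seqNorm p c ≤ eLpNorm (fun x => ∑' l : Λ, c l * φ l x) p volume ∧
      eLpNorm (fun x => ∑' l : Λ, c l * φ l x) p volume ≤ C * seqNorm p c

namespace SynthAux

variable {d : ℕ}

lemma mem_unitCube_iff {k : Fin d → ℤ} {x : Fin d → ℝ} :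
    x ∈ unitCube k ↔ ∀ i, ⌊x i⌋ = k i := by
  simp only [unitCube, Set.mem_setOf_eq]
  exact forall_congr' fun i => Int.floor_eq_iff.symm

lemma self_mem_unitCube (x : Fin d → ℝ) : x ∈ unitCube (fun i => ⌊x i⌋) :=
  mem_unitCube_iff.2 fun _ => rfl

lemma unitCube_eq_pi (k : Fin d → ℤ) :
    unitCube k = Set.univ.pi fun i => Set.Ico (k i : ℝ) ((k i : ℝ) + 1) := by
  ext x; simp [unitCube, Set.mem_pi]

lemma measurableSet_unitCube (k : Fin d → ℤ) : MeasurableSet (unitCube k) := by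
  rw [unitCube_eq_pi]; exact MeasurableSet.univ_pi fun i => measurableSet_Ico

lemma volume_unitCube (k : Fin d → ℤ) : volume (unitCube k) = 1 := by
  rw [unitCube_eq_pi, volume_pi_pi]
  simp [Real.volume_Ico]

lemma sub_intCast_mem_unitCube_zero {k : Fin d → ℤ} {y : Fin d → ℝ} :
    y - (fun i => (k i : ℝ)) ∈ unitCube (0 : Fin d → ℤ) ↔ ∀ i, ⌊y i⌋ = k i := by
  rw [mem_unitCube_iff]
  refine forall_congr' fun i => ?_
  rw [Pi.sub_apply, Int.floor_sub_intCast, Pi.zero_apply, sub_eq_zero]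

lemma tsum_indicator_floor (h : (Fin d → ℤ) → ℝ≥0∞) (y : Fin d → ℝ) :
    ∑' k : Fin d → ℤ, (unitCube k).indicator (fun _ => h k) y = h (fun i => ⌊y i⌋) := by
  rw [tsum_eq_single (fun i => ⌊y i⌋)]
  · rw [Set.indicator_of_mem (self_mem_unitCube y)]
  · intro k hk
    refine Set.indicator_of_notMem (fun hy => hk ?_) _
    exact (funext fun i => mem_unitCube_iff.1 hy i).symm

lemma measurable_floorComp (h : (Fin d → ℤ) → ℝ≥0∞) :
    Measurable (fun y : Fin d → ℝ => h (fun i => ⌊y i⌋)) := by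
  refine (measurable_of_countable h).comp ?_
  exact measurable_pi_lambda _ fun i => (measurable_pi_apply i).floor

lemma lintegral_floorComp (h : (Fin d → ℤ) → ℝ≥0∞) :
    ∫⁻ y : Fin d → ℝ, h (fun i => ⌊y i⌋) = ∑' k : Fin d → ℤ, h k := by
  have : ∀ y : Fin d → ℝ, h (fun i => ⌊y i⌋)
      = ∑' k : Fin d → ℤ, (unitCube k).indicator (fun _ => h k) y :=
    fun y => (tsum_indicator_floor h y).symm
  simp_rw [this]
  rw [lintegral_tsum fun k => ((measurable_const.indicator
    (measurableSet_unitCube k))).aemeasurable]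
  refine tsum_congr fun k => ?_
  rw [lintegral_indicator_const (measurableSet_unitCube k), volume_unitCube, mul_one]

lemma countable_of_relSep {Λ : Set (Fin d → ℝ)} (h : relSep Λ < ∞) : Λ.Countable := by
  have key : ∀ x : Fin d → ℝ,
      {l : ↥Λ | x - (l : Fin d → ℝ) ∈ unitCube (0 : Fin d → ℤ)}.Finite := by
    intro x
    rw [← Set.not_infinite]
    intro hinf
    have hcard : (∑' l : ↥Λ,
        (unitCube (0 : Fin d → ℤ)).indicator (fun _ => (1 : ℝ≥0∞)) (x - (l : Fin d → ℝ))) = ∞ := by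
      have heq : (fun l : ↥Λ =>
          (unitCube (0 : Fin d → ℤ)).indicator (fun _ => (1 : ℝ≥0∞)) (x - (l : Fin d → ℝ)))
          = {l : ↥Λ | x - (l : Fin d → ℝ) ∈ unitCube (0 : Fin d → ℤ)}.indicator
            (fun _ => (1 : ℝ≥0∞)) := by
        funext l
        by_cases hl : x - (l : Fin d → ℝ) ∈ unitCube (0 : Fin d → ℤ) <;>
          simp [Set.indicator, hl]
      rw [heq, ← tsum_subtype]
      haveI := hinf.to_subtype
      exact ENNReal.tsum_const_eq_top_of_ne_zero one_ne_zero
    have hle : (∑' l : ↥Λ,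
        (unitCube (0 : Fin d → ℤ)).indicator (fun _ => (1 : ℝ≥0∞)) (x - (l : Fin d → ℝ)))
        ≤ relSep Λ :=
      le_iSup (fun x : Fin d → ℝ => ∑' l : ↥Λ,
        (unitCube (0 : Fin d → ℤ)).indicator (fun _ => (1 : ℝ≥0∞)) (x - (l : Fin d → ℝ))) x
    rw [hcard] at hle
    exact absurd (top_le_iff.1 hle) h.ne
  rw [← Set.countable_coe_iff, ← Set.countable_univ_iff]
  have hcover : (Set.univ : Set ↥Λ) = ⋃ k : Fin d → ℤ,
      {l : ↥Λ | (fun i => ((k i : ℝ))) - (l : Fin d → ℝ) ∈ unitCube (0 : Fin d → ℤ)} := by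
    refine Set.eq_of_subset_of_subset (fun l _ => ?_) (fun _ _ => trivial)
    refine Set.mem_iUnion.2 ⟨fun i => ⌈(l : Fin d → ℝ) i⌉, ?_⟩
    simp only [Set.mem_setOf_eq, mem_unitCube_iff]
    intro i
    rw [Pi.sub_apply, Pi.zero_apply]
    have h1 : (l : Fin d → ℝ) i ≤ (⌈(l : Fin d → ℝ) i⌉ : ℝ) := Int.le_ceil _
    have h2 : (⌈(l : Fin d → ℝ) i⌉ : ℝ) < (l : Fin d → ℝ) i + 1 := Int.ceil_lt_add_one _
    rw [Int.floor_eq_iff]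
    constructor
    · simpa using sub_nonneg.2 h1
    · push_cast; linarith
  rw [hcover]
  exact Set.countable_iUnion fun k => (key _).countable


lemma floorComp_expand (h : (Fin d → ℤ) → ℝ≥0∞) (y : Fin d → ℝ) :
    h (fun i => ⌊y i⌋) = ∑' k : Fin d → ℤ,
      h k * (unitCube (0 : Fin d → ℤ)).indicator (fun _ => (1 : ℝ≥0∞))
        (y - fun i => ((k i : ℝ))) := by
  rw [tsum_eq_single (fun i => ⌊y i⌋)]
  · rw [Set.indicator_of_mem (sub_intCast_mem_unitCube_zero.2 fun _ => rfl), mul_one]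
  · intro k hk
    rw [Set.indicator_of_notMem, mul_zero]
    intro hy
    exact hk (funext fun i => (sub_intCast_mem_unitCube_zero.1 hy i).symm)

lemma tsum_floorComp_le {Λ : Set (Fin d → ℝ)} (h : (Fin d → ℤ) → ℝ≥0∞) (x : Fin d → ℝ) :
    (∑' l : ↥Λ, h (fun i => ⌊(x - (l : Fin d → ℝ)) i⌋))
      ≤ (∑' k : Fin d → ℤ, h k) * relSep Λ := by
  calc (∑' l : ↥Λ, h (fun i => ⌊(x - (l : Fin d → ℝ)) i⌋))
      = ∑' l : ↥Λ, ∑' k : Fin d → ℤ,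
        h k * (unitCube (0 : Fin d → ℤ)).indicator (fun _ => (1 : ℝ≥0∞))
          ((x - fun i => ((k i : ℝ))) - (l : Fin d → ℝ)) := by
        refine tsum_congr fun l => ?_
        rw [floorComp_expand h (x - (l : Fin d → ℝ))]
        refine tsum_congr fun k => ?_
        rw [sub_right_comm]
    _ = ∑' k : Fin d → ℤ, ∑' l : ↥Λ,
        h k * (unitCube (0 : Fin d → ℤ)).indicator (fun _ => (1 : ℝ≥0∞))
          ((x - fun i => ((k i : ℝ))) - (l : Fin d → ℝ)) := ENNReal.tsum_comm
    _ = ∑' k : Fin d → ℤ, h k * ∑' l : ↥Λ,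
        (unitCube (0 : Fin d → ℤ)).indicator (fun _ => (1 : ℝ≥0∞))
          ((x - fun i => ((k i : ℝ))) - (l : Fin d → ℝ)) := by
        refine tsum_congr fun k => ?_
        rw [ENNReal.tsum_mul_left]
    _ ≤ ∑' k : Fin d → ℤ, h k * relSep Λ := by
        refine ENNReal.tsum_le_tsum fun k => mul_le_mul_right ?_ _
        exact le_iSup (fun x : Fin d → ℝ => ∑' l : ↥Λ,
          (unitCube (0 : Fin d → ℤ)).indicator (fun _ => (1 : ℝ≥0∞)) (x - (l : Fin d → ℝ)))
          (x - fun i => ((k i : ℝ)))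
    _ = (∑' k : Fin d → ℤ, h k) * relSep Λ := ENNReal.tsum_mul_right

end SynthAux

/-- **Boundedness of the synthesis operator (Lemma 3.5).** For `1 ≤ p ≤ ∞` there is a
constant `C` depending only on `d` and `p` such that for every relatively-separated
`Λ ⊆ ℝ^d` and every family `Φ = (φ_λ)` with `‖sup_λ |φ_λ(·+λ)|‖_{W₁} < ∞`,
`‖S_Φ c‖_p ≤ C R(Λ)^{1-1/p} ‖sup_λ |φ_λ(·+λ)|‖_{W₁} ‖c‖_{ℓ^p(Λ)}` for all `c ∈ ℓ^p(Λ)`. -/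
theorem synthesis_operator_bounded (d : ℕ) (p : ℝ≥0∞) (hp : 1 ≤ p) :
    ∃ C : ℝ≥0∞, 0 < C ∧ C < ∞ ∧
      ∀ (Λ : Set (Fin d → ℝ)), relSep Λ < ∞ →
        ∀ φ : Λ → (Fin d → ℝ) → ℂ,
          wienerNorm (fun x => ⨆ l : Λ, (‖φ l (x + (l : Fin d → ℝ))‖₊ : ℝ≥0∞)) < ∞ →
            ∀ c : Λ → ℂ, seqNorm p c < ∞ →
              eLpNorm (fun x => ∑' l : Λ, c l * φ l x) p volume ≤
                C * relSep Λ ^ (1 - 1 / p.toReal) *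
                  wienerNorm (fun x => ⨆ l : Λ, (‖φ l (x + (l : Fin d → ℝ))‖₊ : ℝ≥0∞)) *
                  seqNorm p c := by
  refine ⟨1, zero_lt_one, ENNReal.one_lt_top, ?_⟩
  intro Λ hR φ hW c _
  haveI : Countable ↥Λ := (SynthAux.countable_of_relSep hR).to_subtype
  set g : (Fin d → ℝ) → ℝ≥0∞ :=
    fun x => ⨆ l : Λ, (‖φ l (x + (l : Fin d → ℝ))‖₊ : ℝ≥0∞) with hgdef
  set Gk : (Fin d → ℤ) → ℝ≥0∞ := fun k => ⨆ x ∈ unitCube k, g x with hGkdef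
  set G : (Fin d → ℝ) → ℝ≥0∞ := fun y => Gk (fun i => ⌊y i⌋) with hGdef
  set a : ↥Λ → ℝ≥0∞ := fun l => (‖c l‖₊ : ℝ≥0∞) with hadef
  have hWeq : wienerNorm g = ∑' k : Fin d → ℤ, Gk k := rfl
  have hGle : ∀ y, g y ≤ G y := fun y => le_biSup g (SynthAux.self_mem_unitCube y)
  have hφle : ∀ (l : ↥Λ) (x : Fin d → ℝ), (‖φ l x‖₊ : ℝ≥0∞) ≤ G (x - (l : Fin d → ℝ)) := by
    intro l x
    have h1 := le_iSup
      (fun l' : ↥Λ => (‖φ l' ((x - (l : Fin d → ℝ)) + (l' : Fin d → ℝ))‖₊ : ℝ≥0∞)) l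
    rw [sub_add_cancel] at h1
    exact h1.trans (hGle _)
  have hfF : ∀ x : Fin d → ℝ, (‖∑' l : ↥Λ, c l * φ l x‖₊ : ℝ≥0∞)
      ≤ ∑' l : ↥Λ, a l * G (x - (l : Fin d → ℝ)) := by
    intro x
    by_cases hfin : (∑' l : ↥Λ, a l * G (x - (l : Fin d → ℝ))) = ∞
    · rw [hfin]; exact le_top
    · have hsum1 : Summable fun l : ↥Λ => ‖c l * φ l x‖₊ := by
        rw [← ENNReal.tsum_coe_ne_top_iff_summable]
        refine ne_top_of_le_ne_top hfin (ENNReal.tsum_le_tsum fun l => ?_)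
        rw [nnnorm_mul, ENNReal.coe_mul]
        exact mul_le_mul_right (hφle l x) _
      calc (‖∑' l : ↥Λ, c l * φ l x‖₊ : ℝ≥0∞)
          ≤ ((∑' l : ↥Λ, ‖c l * φ l x‖₊ : ℝ≥0) : ℝ≥0∞) :=
            ENNReal.coe_le_coe.2 (nnnorm_tsum_le hsum1)
        _ = ∑' l : ↥Λ, (‖c l * φ l x‖₊ : ℝ≥0∞) := ENNReal.coe_tsum hsum1
        _ ≤ ∑' l : ↥Λ, a l * G (x - (l : Fin d → ℝ)) := by
            refine ENNReal.tsum_le_tsum fun l => ?_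
            rw [nnnorm_mul, ENNReal.coe_mul]
            exact mul_le_mul_right (hφle l x) _
  have hS : ∀ x : Fin d → ℝ, (∑' l : ↥Λ, G (x - (l : Fin d → ℝ)))
      ≤ wienerNorm g * relSep Λ :=
    fun x => SynthAux.tsum_floorComp_le Gk x
  have hmeasG : Measurable G := SynthAux.measurable_floorComp Gk
  have hintGtrans : ∀ l : ↥Λ,
      ∫⁻ x : Fin d → ℝ, G (x - (l : Fin d → ℝ)) = wienerNorm g := by
    intro l
    rw [lintegral_sub_right_eq_self G ((l : Fin d → ℝ))]
    exact SynthAux.lintegral_floorComp Gk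
  by_cases hptop : p = ∞
  · subst hptop
    rw [eLpNorm_exponent_top]
    have hbound : ∀ x : Fin d → ℝ, (‖∑' l : ↥Λ, c l * φ l x‖₊ : ℝ≥0∞)
        ≤ (⨆ l : ↥Λ, a l) * (wienerNorm g * relSep Λ) := by
      intro x
      refine (hfF x).trans ?_
      calc (∑' l : ↥Λ, a l * G (x - (l : Fin d → ℝ)))
          ≤ ∑' l : ↥Λ, (⨆ l' : ↥Λ, a l') * G (x - (l : Fin d → ℝ)) :=
            ENNReal.tsum_le_tsum fun l => mul_le_mul_left (le_iSup a l) _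
        _ = (⨆ l' : ↥Λ, a l') * ∑' l : ↥Λ, G (x - (l : Fin d → ℝ)) := ENNReal.tsum_mul_left
        _ ≤ (⨆ l' : ↥Λ, a l') * (wienerNorm g * relSep Λ) := mul_le_mul_right (hS x) _
    refine le_trans (essSup_le_of_ae_le _ (Filter.Eventually.of_forall hbound)) ?_
    have hsn : seqNorm ∞ c = ⨆ l : ↥Λ, a l := by rw [seqNorm, seqNormE, if_pos rfl]
    rw [hsn]
    simp only [ENNReal.toReal_top, div_zero, sub_zero, ENNReal.rpow_one, one_mul]
    exact le_of_eq (by ring)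
  · have hp0 : p ≠ 0 := (lt_of_lt_of_le zero_lt_one hp).ne'
    have hr1 : (1 : ℝ) ≤ p.toReal := by
      rw [← ENNReal.toReal_one]
      exact ENNReal.toReal_mono hptop hp
    set r := p.toReal with hrdef
    have hr0 : (0 : ℝ) < r := lt_of_lt_of_le one_pos hr1
    have hsn : seqNorm p c = (∑' l : ↥Λ, a l ^ r) ^ (1 / r) := by
      rw [seqNorm, seqNormE, if_neg hptop]
    have hT : ∫⁻ x : Fin d → ℝ, ∑' l : ↥Λ, a l ^ r * G (x - (l : Fin d → ℝ))
        = (∑' l : ↥Λ, a l ^ r) * wienerNorm g := by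
      have hml : ∀ l : ↥Λ, AEMeasurable
          (fun x : Fin d → ℝ => a l ^ r * G (x - (l : Fin d → ℝ))) volume :=
        fun l => ((hmeasG.comp (measurable_id.sub_const _)).const_mul _).aemeasurable
      rw [lintegral_tsum hml]
      have : ∀ l : ↥Λ, ∫⁻ x : Fin d → ℝ, a l ^ r * G (x - (l : Fin d → ℝ))
          = a l ^ r * wienerNorm g := by
        intro l
        rw [lintegral_const_mul' _ _
          (ENNReal.rpow_ne_top_of_nonneg hr0.le ENNReal.coe_ne_top), hintGtrans l]
      simp_rw [this]
      exact ENNReal.tsum_mul_right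
    have hpt : ∀ x : Fin d → ℝ, (∑' l : ↥Λ, a l * G (x - (l : Fin d → ℝ))) ^ r
        ≤ (wienerNorm g * relSep Λ) ^ (r - 1)
          * ∑' l : ↥Λ, a l ^ r * G (x - (l : Fin d → ℝ)) := by
      intro x
      rcases eq_or_lt_of_le hr1 with hr | hr
      · rw [← hr]
        norm_num
      · set q := Real.conjExponent r with hqdef
        have hpq : r.HolderConjugate q := Real.HolderConjugate.conjExponent hr
        have key := ENNReal.lintegral_mul_le_Lp_mul_Lq (Measure.count : Measure ↥Λ) hpq
          (f := fun l : ↥Λ => a l * G (x - (l : Fin d → ℝ)) ^ (1/r))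
          (g := fun l : ↥Λ => G (x - (l : Fin d → ℝ)) ^ (1/q))
          (measurable_of_countable _).aemeasurable (measurable_of_countable _).aemeasurable
        rw [lintegral_count, lintegral_count, lintegral_count] at key
        have e1 : ∀ l : ↥Λ, ((fun l : ↥Λ => a l * G (x - (l : Fin d → ℝ)) ^ (1/r)) *
            (fun l : ↥Λ => G (x - (l : Fin d → ℝ)) ^ (1/q))) l
            = a l * G (x - (l : Fin d → ℝ)) := by
          intro l
          simp only [Pi.mul_apply]
          rw [mul_assoc, ← ENNReal.rpow_add_of_nonneg _ _ (one_div_nonneg.2 hpq.nonneg)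
              (one_div_nonneg.2 hpq.symm.nonneg),
            one_div, one_div, hpq.inv_add_inv_eq_one, ENNReal.rpow_one]
        have e2 : ∀ l : ↥Λ, (a l * G (x - (l : Fin d → ℝ)) ^ (1/r)) ^ r
            = a l ^ r * G (x - (l : Fin d → ℝ)) := by
          intro l
          rw [ENNReal.mul_rpow_of_nonneg _ _ hr0.le, ← ENNReal.rpow_mul,
            one_div_mul_cancel hr0.ne', ENNReal.rpow_one]
        have e3 : ∀ l : ↥Λ, (G (x - (l : Fin d → ℝ)) ^ (1/q)) ^ q
            = G (x - (l : Fin d → ℝ)) := by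
          intro l
          rw [← ENNReal.rpow_mul, one_div_mul_cancel hpq.symm.pos.ne', ENNReal.rpow_one]
        simp_rw [e1, e2, e3] at key
        have hqr : (1/q) * r = r - 1 := by
          rw [one_div, ← hpq.one_sub_inv]
          field_simp
        calc (∑' l : ↥Λ, a l * G (x - (l : Fin d → ℝ))) ^ r
            ≤ ((∑' l : ↥Λ, a l ^ r * G (x - (l : Fin d → ℝ))) ^ (1/r)
              * (∑' l : ↥Λ, G (x - (l : Fin d → ℝ))) ^ (1/q)) ^ r :=
              ENNReal.rpow_le_rpow key hr0.le
          _ = (∑' l : ↥Λ, a l ^ r * G (x - (l : Fin d → ℝ)))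
              * (∑' l : ↥Λ, G (x - (l : Fin d → ℝ))) ^ ((1/q) * r) := by
              rw [ENNReal.mul_rpow_of_nonneg _ _ hr0.le, ← ENNReal.rpow_mul,
                ← ENNReal.rpow_mul, one_div_mul_cancel hr0.ne', ENNReal.rpow_one]
          _ ≤ (∑' l : ↥Λ, a l ^ r * G (x - (l : Fin d → ℝ)))
              * (wienerNorm g * relSep Λ) ^ (r - 1) := by
              rw [hqr]
              exact mul_le_mul_right (ENNReal.rpow_le_rpow (hS x) (by linarith)) _
          _ = (wienerNorm g * relSep Λ) ^ (r - 1)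
              * ∑' l : ↥Λ, a l ^ r * G (x - (l : Fin d → ℝ)) := mul_comm _ _
    rw [eLpNorm_eq_lintegral_rpow_enorm_toReal hp0 hptop]
    calc (∫⁻ x, (‖∑' l : ↥Λ, c l * φ l x‖₊ : ℝ≥0∞) ^ r) ^ (1/r)
        ≤ (∫⁻ x, (∑' l : ↥Λ, a l * G (x - (l : Fin d → ℝ))) ^ r) ^ (1/r) :=
          ENNReal.rpow_le_rpow (lintegral_mono fun x =>
            ENNReal.rpow_le_rpow (hfF x) hr0.le) (by positivity)
      _ ≤ ((wienerNorm g * relSep Λ) ^ (r - 1)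
            * ((∑' l : ↥Λ, a l ^ r) * wienerNorm g)) ^ (1/r) := by
          refine ENNReal.rpow_le_rpow ?_ (by positivity)
          calc ∫⁻ x, (∑' l : ↥Λ, a l * G (x - (l : Fin d → ℝ))) ^ r
              ≤ ∫⁻ x, (wienerNorm g * relSep Λ) ^ (r - 1)
                * ∑' l : ↥Λ, a l ^ r * G (x - (l : Fin d → ℝ)) := lintegral_mono hpt
            _ = (wienerNorm g * relSep Λ) ^ (r - 1)
                * ∫⁻ x, ∑' l : ↥Λ, a l ^ r * G (x - (l : Fin d → ℝ)) :=
                lintegral_const_mul' _ _ (ENNReal.rpow_ne_top_of_nonneg (by linarith)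
                  (ENNReal.mul_ne_top hW.ne hR.ne))
            _ = (wienerNorm g * relSep Λ) ^ (r - 1)
                * ((∑' l : ↥Λ, a l ^ r) * wienerNorm g) := by rw [hT]
      _ = 1 * relSep Λ ^ (1 - 1/r) * wienerNorm g * seqNorm p c := by
          rw [hsn, one_mul]
          have h1r : (0:ℝ) ≤ 1/r := one_div_nonneg.2 hr0.le
          have hrm1 : (0:ℝ) ≤ r - 1 := by linarith
          have h11r : (0:ℝ) ≤ 1 - 1/r := by
            rw [sub_nonneg, div_le_one hr0]; exact hr1
          rw [ENNReal.mul_rpow_of_nonneg _ _ h1r, ENNReal.mul_rpow_of_nonneg _ _ h1r,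
            ← ENNReal.rpow_mul, ENNReal.mul_rpow_of_nonneg _ _ (mul_nonneg hrm1 h1r)]
          have h1 : (r - 1) * (1/r) = 1 - 1/r := by
            rw [mul_one_div, sub_div, div_self hr0.ne']
          rw [h1]
          calc wienerNorm g ^ (1 - 1/r) * relSep Λ ^ (1 - 1/r)
              * ((∑' l : ↥Λ, a l ^ r) ^ (1/r) * wienerNorm g ^ (1/r))
              = relSep Λ ^ (1 - 1/r)
                * (wienerNorm g ^ (1 - 1/r) * wienerNorm g ^ (1/r))
                * (∑' l : ↥Λ, a l ^ r) ^ (1/r) := by ring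
            _ = relSep Λ ^ (1 - 1/r) * wienerNorm g * (∑' l : ↥Λ, a l ^ r) ^ (1/r) := by
                rw [← ENNReal.rpow_add_of_nonneg _ _ h11r h1r, sub_add_cancel,
                  ENNReal.rpow_one]
end

section
/- Let Λ be a relatively-separated subset of ℝ^d, let Φ = {φ_λ : λ ∈ Λ} satisfy |φ_λ(x)| ≤ h(x−λ) for all x ∈ ℝ^d and λ ∈ Λ, where h(x) := sup_{λ∈Λ} |φ_λ(x+λ)| belongs to the Wiener amalgam space W₁. For an integer n ≥ 1, define the matrix A_n = (a_n(λ',λ))_{λ'∈2^{−n}ℤ^d, λ∈Λ} by a_n(λ',λ) = 2^{nd} ∫_{ℝ^d} φ_λ(y) χ_{[0,1)^d}(2^n(y−λ')) dy. Then A_n belongs to the Sjöstrand class C(2^{−n}ℤ^d, Λ) with ‖A_n‖_C ≤ 2^d ‖h‖_{W₁}. -/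
open scoped ENNReal NNReal

open MeasureTheory

/-- The dyadic lattice `2⁻ⁿ ℤ^d` in `ℝ^d`. -/
def dyadicLattice (d n : ℕ) : Set (Fin d → ℝ) :=
  {x | ∃ k : Fin d → ℤ, ∀ i, x i = (k i : ℝ) / 2 ^ n}

/-- **Sjöstrand-class membership of the discretization matrix.** Let `Λ ⊆ ℝ^d` be
relatively separated and `Φ = (φ_λ)` satisfy `|φ_λ(x)| ≤ h(x-λ)` with
`h(x) = sup_λ |φ_λ(x+λ)|` in the Wiener amalgam space `W₁`. Then the matrix
`A_n = (a_n(λ',λ))_{λ' ∈ 2⁻ⁿℤ^d, λ ∈ Λ}` with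
`a_n(λ',λ) = 2^{nd} ∫ φ_λ(y) χ_{[0,1)^d}(2ⁿ(y - λ')) dy` belongs to the Sjöstrand
class `C(2⁻ⁿℤ^d, Λ)`, with `‖A_n‖_C ≤ 2^d ‖h‖_{W₁}`. -/
theorem discretization_matrix_in_sjostrand_class {d : ℕ}
    (Λ : Set (Fin d → ℝ)) (hΛ : relSep Λ < ∞)
    (φ : Λ → (Fin d → ℝ) → ℂ)
    (hW : wienerNorm (fun x => ⨆ l : Λ, (‖φ l (x + (l : Fin d → ℝ))‖₊ : ℝ≥0∞)) < ∞)
    (n : ℕ) (hn : 1 ≤ n)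
    (A : dyadicLattice d n → Λ → ℂ)
    (hA : ∀ (l' : dyadicLattice d n) (l : Λ),
      A l' l = (2 : ℂ) ^ (n * d) * ∫ y : Fin d → ℝ,
        φ l y * (unitCube (0 : Fin d → ℤ)).indicator (fun _ => (1 : ℂ))
          (fun i => 2 ^ n * (y i - (l' : Fin d → ℝ) i))) :
    sjNorm A ≤ (2 : ℝ≥0∞) ^ d *
      wienerNorm (fun x => ⨆ l : Λ, (‖φ l (x + (l : Fin d → ℝ))‖₊ : ℝ≥0∞)) := by
  classical
  set h : (Fin d → ℝ) → ℝ≥0∞ :=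
    fun x => ⨆ l : Λ, (‖φ l (x + (l : Fin d → ℝ))‖₊ : ℝ≥0∞) with hh
  set T : (Fin d → ℤ) → ℝ≥0∞ := fun k => ⨆ x ∈ unitCube k, h x with hT
  set ι : (Fin d → Bool) → (Fin d → ℤ) := fun ε i => if ε i then 1 else 0 with hι
  have h2pos : (0:ℝ) < 2 ^ n := by positivity
  have key : ∀ k : Fin d → ℤ,
      (⨆ (l' : dyadicLattice d n) (l : Λ)
        (_ : (l' : Fin d → ℝ) - (l : Fin d → ℝ) ∈ unitCube k),
        (‖A l' l‖₊ : ℝ≥0∞)) ≤ ∑ ε : Fin d → Bool, T (k + ι ε) := by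
    intro k
    refine iSup_le fun l' => iSup_le fun l => iSup_le fun hm => ?_
    set M : ℝ≥0∞ := ∑ ε : Fin d → Bool, T (k + ι ε) with hM
    set S : Set (Fin d → ℝ) :=
      Set.univ.pi fun i => Set.Ico ((l' : Fin d → ℝ) i)
        ((l' : Fin d → ℝ) i + ((2:ℝ)^n)⁻¹) with hS
    have hSm : MeasurableSet S := MeasurableSet.univ_pi fun i => measurableSet_Ico
    -- pointwise bound on the norm of the integrand
    have hpt : ∀ y : Fin d → ℝ,
        (‖φ l y * (unitCube (0 : Fin d → ℤ)).indicator (fun _ => (1 : ℂ))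
          (fun i => 2 ^ n * (y i - (l' : Fin d → ℝ) i))‖₊ : ℝ≥0∞)
        ≤ S.indicator (fun _ => M) y := by
      intro y
      by_cases hy : y ∈ S
      · -- indicator value is 1, and ‖φ l y‖ ≤ M
        have hyS : ∀ i, (l' : Fin d → ℝ) i ≤ y i ∧
            y i < (l' : Fin d → ℝ) i + ((2:ℝ)^n)⁻¹ := by
          intro i
          have := hy i (Set.mem_univ i)
          exact ⟨this.1, this.2⟩
        have hmem0 : (fun i => 2 ^ n * (y i - (l' : Fin d → ℝ) i))
            ∈ unitCube (0 : Fin d → ℤ) := by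
          intro i
          obtain ⟨h1, h2⟩ := hyS i
          simp only [Pi.zero_apply, Int.cast_zero, zero_add]
          constructor
          · exact mul_nonneg h2pos.le (by linarith)
          · have hlt : y i - (l' : Fin d → ℝ) i < ((2:ℝ)^n)⁻¹ := by linarith
            have := mul_lt_mul_of_pos_left hlt h2pos
            rwa [mul_inv_cancel₀ (ne_of_gt h2pos)] at this
        rw [Set.indicator_of_mem hmem0, Set.indicator_of_mem hy, mul_one]
        -- choose ε
        set ε : Fin d → Bool := fun i => decide ((k i : ℝ) + 1 ≤ y i - (l : Fin d → ℝ) i)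
          with hε
        have hcube : y - (l : Fin d → ℝ) ∈ unitCube (k + ι ε) := by
          intro i
          obtain ⟨h1, h2⟩ := hyS i
          obtain ⟨h3, h4⟩ := hm i
          have h5 : ((2:ℝ)^n)⁻¹ ≤ 1 := by
            rw [inv_le_one_iff₀]; right; exact one_le_pow₀ (by norm_num)
          have hxi : (y - (l : Fin d → ℝ)) i = y i - (l : Fin d → ℝ) i := rfl
          by_cases hb : (k i : ℝ) + 1 ≤ y i - (l : Fin d → ℝ) i
          · have : ε i = true := by simp [hε, hb]
            simp only [Pi.add_apply, hι, this, if_true, hxi]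
            push_cast
            constructor
            · linarith
            · have : (l' : Fin d → ℝ) i - (l : Fin d → ℝ) i < (k i : ℝ) + 1 := h4
              linarith
          · have : ε i = false := by simp [hε, hb]
            simp only [Pi.add_apply, hι, this, if_false, hxi]
            push_cast
            constructor
            · have : (k i : ℝ) ≤ (l' : Fin d → ℝ) i - (l : Fin d → ℝ) i := h3
              linarith
            · push_neg at hb; linarith
        have h1 : (‖φ l y‖₊ : ℝ≥0∞) ≤ h (y - (l : Fin d → ℝ)) := by
          have : y - (l : Fin d → ℝ) + (l : Fin d → ℝ) = y := by
            funext i; simp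
          calc (‖φ l y‖₊ : ℝ≥0∞)
              = (‖φ l (y - (l : Fin d → ℝ) + (l : Fin d → ℝ))‖₊ : ℝ≥0∞) := by rw [this]
            _ ≤ h (y - (l : Fin d → ℝ)) := le_iSup
                (fun l₂ : Λ => (‖φ l₂ (y - (l : Fin d → ℝ) + (l₂ : Fin d → ℝ))‖₊ : ℝ≥0∞)) l
        have h2 : h (y - (l : Fin d → ℝ)) ≤ T (k + ι ε) :=
          le_iSup₂ (f := fun x (_ : x ∈ unitCube (k + ι ε)) => h x)
            (y - (l : Fin d → ℝ)) hcube
        have h3 : T (k + ι ε) ≤ M :=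
          Finset.single_le_sum (f := fun ε => T (k + ι ε))
            (fun _ _ => zero_le) (Finset.mem_univ ε)
        exact le_trans h1 (le_trans h2 h3)
      · -- not in S: indicator on the left is 0
        have hnot : (fun i => 2 ^ n * (y i - (l' : Fin d → ℝ) i))
            ∉ unitCube (0 : Fin d → ℤ) := by
          intro hc
          apply hy
          intro i _
          obtain ⟨h1, h2⟩ := hc i
          simp only [Pi.zero_apply, Int.cast_zero, zero_add] at h1 h2
          have hinv : ((2:ℝ)^n)⁻¹ * 2^n = 1 := inv_mul_cancel₀ (ne_of_gt h2pos)
          have hinvpos : (0:ℝ) < ((2:ℝ)^n)⁻¹ := by positivity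
          constructor
          · have h3 : (0:ℝ) ≤ ((2:ℝ)^n)⁻¹ * (2^n * (y i - (l' : Fin d → ℝ) i)) :=
              mul_nonneg hinvpos.le h1
            rw [← mul_assoc, hinv, one_mul] at h3
            linarith
          · have h3 := mul_lt_mul_of_pos_left h2 hinvpos
            rw [← mul_assoc, hinv, one_mul, mul_one] at h3
            linarith
        rw [Set.indicator_of_notMem hnot, Set.indicator_of_notMem hy, mul_zero]
        simp
    -- volume of S
    have hvol : volume S = (((2:ℝ≥0∞)^n)⁻¹) ^ d := by
      rw [hS, volume_pi_pi]
      have : ∀ i : Fin d, volume (Set.Ico ((l' : Fin d → ℝ) i)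
          ((l' : Fin d → ℝ) i + ((2:ℝ)^n)⁻¹)) = ((2:ℝ≥0∞)^n)⁻¹ := by
        intro i
        rw [Real.volume_Ico, add_sub_cancel_left, ENNReal.ofReal_inv_of_pos h2pos,
          ENNReal.ofReal_pow (by norm_num : (0:ℝ) ≤ 2)]
        norm_num
      simp [this]
    have hAbound : (‖A l' l‖₊ : ℝ≥0∞) ≤ M := by
      rw [hA l' l]
      have : (‖(2 : ℂ) ^ (n * d) * ∫ y : Fin d → ℝ,
          φ l y * (unitCube (0 : Fin d → ℤ)).indicator (fun _ => (1 : ℂ))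
            (fun i => 2 ^ n * (y i - (l' : Fin d → ℝ) i))‖₊ : ℝ≥0∞)
          = (2:ℝ≥0∞)^(n*d) * (‖∫ y : Fin d → ℝ,
          φ l y * (unitCube (0 : Fin d → ℤ)).indicator (fun _ => (1 : ℂ))
            (fun i => 2 ^ n * (y i - (l' : Fin d → ℝ) i))‖₊ : ℝ≥0∞) := by
        rw [nnnorm_mul, ENNReal.coe_mul]
        congr 1
        rw [nnnorm_pow]
        push_cast
        norm_num
      rw [this]
      calc (2:ℝ≥0∞)^(n*d) * (‖∫ y : Fin d → ℝ,
          φ l y * (unitCube (0 : Fin d → ℤ)).indicator (fun _ => (1 : ℂ))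
            (fun i => 2 ^ n * (y i - (l' : Fin d → ℝ) i))‖₊ : ℝ≥0∞)
          ≤ (2:ℝ≥0∞)^(n*d) * ∫⁻ y, (‖φ l y * (unitCube (0 : Fin d → ℤ)).indicator
              (fun _ => (1 : ℂ)) (fun i => 2 ^ n * (y i - (l' : Fin d → ℝ) i))‖₊ : ℝ≥0∞) :=
            mul_le_mul_right (enorm_integral_le_lintegral_enorm _) _
        _ ≤ (2:ℝ≥0∞)^(n*d) * ∫⁻ y, S.indicator (fun _ => M) y :=
            mul_le_mul_right (lintegral_mono hpt) _
        _ = (2:ℝ≥0∞)^(n*d) * (M * volume S) := by rw [lintegral_indicator_const hSm]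
        _ = M * ((2:ℝ≥0∞)^(n*d) * ((2:ℝ≥0∞)^(n*d))⁻¹) := by
            rw [hvol, ← ENNReal.inv_pow, ← pow_mul]; ring
        _ = M := by
            rw [ENNReal.mul_inv_cancel (by positivity) (by
              exact ENNReal.pow_ne_top (by norm_num)), mul_one]
    exact hAbound
  calc sjNorm A ≤ ∑' k : Fin d → ℤ, ∑ ε : Fin d → Bool, T (k + ι ε) :=
        ENNReal.tsum_le_tsum key
    _ = ∑ ε : Fin d → Bool, ∑' k : Fin d → ℤ, T (k + ι ε) :=
        Summable.tsum_finsetSum fun _ _ => ENNReal.summable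
    _ = ∑ ε : Fin d → Bool, wienerNorm h := by
        refine Finset.sum_congr rfl fun ε _ => ?_
        exact (Equiv.addRight (ι ε)).tsum_eq T
    _ = (2 : ℝ≥0∞) ^ d * wienerNorm h := by
        rw [Finset.sum_const, Finset.card_univ, Fintype.card_fun, Fintype.card_bool,
          Fintype.card_fin, nsmul_eq_mul]
        push_cast
        ring
end
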